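/- arXiv:2404.09224 — 6 statements merged into one kernel-verified Lean document; each statement's English description precedes it below -/
import Mathlib

section
/- Let A be a semiprime unital ring and L ⊆ A a left ideal. Then L contains a Fredholm element (i.e., an element whose image in A/soc(A) is invertible) if and only if there exists an idempotent p ∈ soc(A) such that L = A(1-p). -/
open MulOpposite Submodule

/-- The length of a module: the supremum of lengths of chains of submodules. -/
noncomputable def mlen (R M : Type*) [Ring R] [AddCommGroup M] [Module R M] : ℕ∞ :=
  WithBot.unbotD 0 (Order.krullDim (Submodule R M))

/-- A ring is semiprime if it has no nonzero nilpotent (two-sided) ideals;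
equivalently, `a A a = 0` implies `a = 0`. -/
def IsSemiprimeRing (A : Type*) [Ring A] : Prop :=
  ∀ a : A, (∀ x : A, a * x * a = 0) → a = 0

/-- The (left) socle of a ring: the sum of all minimal left ideals. -/
noncomputable def socle (A : Type*) [Ring A] : Submodule A A :=
  sSup {m : Submodule A A | IsAtom m}

/-- An element is Fredholm if its image in `A/soc(A)` is invertible. -/
def IsFredholmElem {A : Type*} [Ring A] (a : A) : Prop :=
  ∃ b : A, a * b - 1 ∈ socle A ∧ b * a - 1 ∈ socle A

/-- A left ideal is Fredholm if it contains a Fredholm element. -/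
def IsFredholmLeftIdeal {A : Type*} [Ring A] (L : Submodule A A) : Prop :=
  ∃ a ∈ L, IsFredholmElem a

/-- The right annihilator of a set, as a right ideal (`Aᵐᵒᵖ`-submodule of `A`). -/
def rAnn {A : Type*} [Ring A] (S : Set A) : Submodule Aᵐᵒᵖ A where
  carrier := {a | ∀ s ∈ S, s * a = 0}
  add_mem' := by intro x y hx hy s hs; rw [Set.mem_setOf_eq] at *; rw [mul_add, hx s hs, hy s hs, add_zero]
  zero_mem' := by intro s _; exact mul_zero s
  smul_mem' := by
    intro c x hx s hs
    show s * (c • x) = 0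
    rw [MulOpposite.smul_eq_mul_unop, ← mul_assoc, hx s hs, zero_mul]

/-- The left annihilator of a set, as a left ideal. -/
def lAnn {A : Type*} [Ring A] (S : Set A) : Submodule A A where
  carrier := {a | ∀ s ∈ S, a * s = 0}
  add_mem' := by intro x y hx hy s hs; rw [Set.mem_setOf_eq] at *; rw [add_mul, hx s hs, hy s hs, add_zero]
  zero_mem' := by intro s _; exact zero_mul s
  smul_mem' := by
    intro c x hx s hs
    show c * x * s = 0
    rw [mul_assoc, hx s hs, mul_zero]


private lemma socle_semisimple_aux (A : Type*) [Ring A] : IsSemisimpleModule A ↥(socle A) := by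
  rw [socle, sSup_eq_iSup]
  exact isSemisimpleModule_biSup_of_isSemisimpleModule_submodule (fun m hm => by
    have : IsSimpleModule A m := isSimpleModule_iff_isAtom.mpr hm
    infer_instance)

private lemma fredholm_aux (A : Type*) [Ring A] (L : Submodule A A)
    (h : IsFredholmLeftIdeal L) :
    ∃ p : A, IsIdempotentElem p ∧ p ∈ socle A ∧ L = Submodule.span A {1 - p} := by
  obtain ⟨a, haL, b, -, hba⟩ := h
  set S := socle A with hS
  have hsup : L ⊔ S = ⊤ := by
    rw [eq_top_iff]
    intro x _
    have h1 : (1 : A) ∈ L ⊔ S := by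
      rw [(sub_sub_cancel (b*a) 1).symm]
      exact sub_mem (mem_sup_left (L.smul_mem b haL)) (mem_sup_right hba)
    simpa using Submodule.smul_mem _ x h1
  have : IsSemisimpleModule A ↥S := socle_semisimple_aux A
  obtain ⟨C', hC'⟩ := exists_isCompl (Submodule.comap S.subtype L)
  set C : Submodule A A := C'.map S.subtype with hC
  have hCS : C ≤ S := by
    rw [hC]
    rintro x ⟨y, -, rfl⟩; exact y.2
  have hLC_bot : L ⊓ C = ⊥ := by
    rw [eq_bot_iff]
    rintro x ⟨hxL, y, hyC', rfl⟩
    have : y ∈ Submodule.comap S.subtype L ⊓ C' := ⟨hxL, hyC'⟩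
    rw [hC'.inf_eq_bot] at this
    have : y = 0 := by simpa using this
    simp [this]
  have hLC_top : L ⊔ C = ⊤ := by
    rw [eq_top_iff, ← hsup, sup_le_iff]
    refine ⟨le_sup_left, ?_⟩
    intro s hs
    have : (⟨s, hs⟩ : S) ∈ Submodule.comap S.subtype L ⊔ C' := by
      rw [hC'.sup_eq_top]; trivial
    obtain ⟨y, hy, z, hz, hyz⟩ := Submodule.mem_sup.mp this
    have : s = (y : A) + (z : A) := by
      have := congrArg (S.subtype) hyz; simpa using this.symm
    rw [this]
    exact add_mem (mem_sup_left hy) (mem_sup_right ⟨z, hz, rfl⟩)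
  obtain ⟨e, he, p, hp, hep⟩ := Submodule.mem_sup.mp (hLC_top ▸ Submodule.mem_top (x := (1:A)))
  refine ⟨p, ?_, hCS hp, ?_⟩
  · have h1 : p * e + p * p = p := by rw [← mul_add, hep, mul_one]
    have hpe : p * e ∈ L ⊓ C := by
      constructor
      · exact L.smul_mem p he
      · have : p * e = p - p * p := eq_sub_of_add_eq h1
        rw [this]
        exact sub_mem hp (C.smul_mem p hp)
    rw [hLC_bot, Submodule.mem_bot] at hpe
    have := h1
    rw [hpe, zero_add] at this
    exact this
  · have he' : e = 1 - p := eq_sub_of_add_eq hep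
    rw [← he']
    apply le_antisymm
    · intro x hx
      have h1 : x * e + x * p = x := by rw [← mul_add, hep, mul_one]
      have hxp : x * p ∈ L ⊓ C := by
        constructor
        · have : x * p = x - x * e := eq_sub_of_add_eq' h1
          rw [this]; exact sub_mem hx (L.smul_mem x he)
        · exact C.smul_mem x hp
      rw [hLC_bot, Submodule.mem_bot] at hxp
      have h2 := h1
      rw [hxp, add_zero] at h2
      rw [← h2]
      exact Submodule.smul_mem _ x (Submodule.mem_span_singleton_self e)
    · rw [Submodule.span_le, Set.singleton_subset_iff]
      exact he

theorem stmt0 (A : Type*) [Ring A] (hA : IsSemiprimeRing A) (L : Submodule A A) :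
    IsFredholmLeftIdeal L ↔
      ∃ p : A, IsIdempotentElem p ∧ p ∈ socle A ∧ L = Submodule.span A {1 - p} := by
  constructor
  · exact fredholm_aux A L
  · rintro ⟨p, hpidem, hpsoc, rfl⟩
    refine ⟨1 - p, Submodule.mem_span_singleton_self _, 1 - p, ?_, ?_⟩ <;>
    · have : (1 - p) * (1 - p) - 1 = -p := by
        have := hpidem
        unfold IsIdempotentElem at this
        rw [mul_sub, sub_mul, sub_mul, this]
        noncomm_ring
      rw [this]
      exact neg_mem hpsoc
end

section
/- Let A be a semiprime unital ring. If L and L' are Fredholm left ideals of A, then L ∩ L' is a Fredholm left ideal. -/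
open MulOpposite Submodule

section Aux

variable {A : Type*} [Ring A]

/-- Right multiplication as an A-linear endomorphism of A. -/
def rmul (y : A) : A →ₗ[A] A where
  toFun x := x * y
  map_add' a b := add_mul a b y
  map_smul' c x := by simp [smul_eq_mul, mul_assoc]

lemma map_atom_le_socle (f : A →ₗ[A] A) (m : Submodule A A) (hm : IsAtom m) :
    Submodule.map f m ≤ socle A := by
  rcases eq_or_ne (Submodule.map f m) ⊥ with h | h
  · simp [h]
  · refine le_sSup ⟨h, fun N hN => ?_⟩
    have hcom : m ⊓ Submodule.comap f N ≠ m := by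
      intro heq
      have : Submodule.map f m ≤ N := by
        intro y hy
        obtain ⟨x, hx, hfx⟩ := hy
        have : x ∈ m ⊓ Submodule.comap f N := by rw [heq]; exact hx
        exact hfx ▸ this.2
      exact absurd (lt_of_lt_of_le hN this) (lt_irrefl N)
    have hbot : m ⊓ Submodule.comap f N = ⊥ :=
      hm.2 _ (lt_of_le_of_ne inf_le_left hcom)
    ext y
    simp only [Submodule.mem_bot]
    constructor
    · intro hy
      obtain ⟨x, hx, hfx⟩ := hN.le hy
      have : x ∈ m ⊓ Submodule.comap f N := ⟨hx, by simpa [Submodule.mem_comap, hfx] using hy⟩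
      rw [hbot] at this
      have hx0 : x = 0 := by simpa using this
      rw [← hfx, hx0, map_zero]
    · rintro rfl; exact N.zero_mem

lemma socle_mul_mem {s : A} (hs : s ∈ socle A) (y : A) : s * y ∈ socle A := by
  have : socle A ≤ Submodule.comap (rmul y) (socle A) := by
    refine sSup_le fun m hm => fun x hx => map_atom_le_socle (rmul y) m hm ⟨x, hx, rfl⟩
  exact this hs

end Aux

section Reg
variable {A : Type*} [Ring A]

lemma atom_eq_of_le_ne_bot {I N : Submodule A A} (hI : IsAtom I) (hle : N ≤ I) (hne : N ≠ ⊥) :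
    N = I := by
  by_contra h
  exact hne (hI.2 N (lt_of_le_of_ne hle h))

lemma atom_regular (hA : ∀ a : A, (∀ x : A, a * x * a = 0) → a = 0)
    {I : Submodule A A} (hI : IsAtom I) {b : A} (hb : b ∈ I) (hb0 : b ≠ 0) :
    ∃ y : A, b * y * b = b := by
  -- I² ≠ 0
  have hsq : ∃ z ∈ I, ∃ w ∈ I, z * w ≠ 0 := by
    by_contra h
    push_neg at h
    have hz0 : ∀ z ∈ I, z = 0 := by
      intro z hz
      refine hA z fun x => ?_
      have : z * (x * z) = 0 := h z hz (x * z) (by simpa [smul_eq_mul] using I.smul_mem x hz)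
      rwa [← mul_assoc] at this
    exact hI.1 (by ext x; simp only [Submodule.mem_bot]; exact ⟨fun hx => hz0 x hx, by rintro rfl; exact I.zero_mem⟩)
  obtain ⟨z, hzI, b', hb'I, hzb'⟩ := hsq
  have hb'0 : b' ≠ 0 := fun h => hzb' (by simp [h])
  -- I * b' = I
  have hM : Submodule.map (rmul b') I = I := by
    refine atom_eq_of_le_ne_bot hI ?_ ?_
    · rintro y ⟨x, hx, rfl⟩
      simpa [rmul, smul_eq_mul] using I.smul_mem x hb'I
    · intro h
      have : z * b' ∈ Submodule.map (rmul b') I := ⟨z, hzI, rfl⟩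
      rw [h] at this
      exact hzb' (by simpa using this)
  obtain ⟨e, heI, heb'⟩ : ∃ e ∈ I, e * b' = b' := by
    have : b' ∈ Submodule.map (rmul b') I := hM.symm ▸ hb'I
    obtain ⟨e, heI, he⟩ := this
    exact ⟨e, heI, he⟩
  have he0 : e ≠ 0 := fun h => hb'0 (by rw [← heb', h, zero_mul])
  -- kernel trick : e is idempotent
  have hK : I ⊓ LinearMap.ker (rmul b') = ⊥ := by
    refine hI.2 _ (lt_of_le_of_ne inf_le_left fun h => ?_)
    have : e ∈ I ⊓ LinearMap.ker (rmul b') := h.symm ▸ heI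
    exact hb'0 (by rw [← heb']; exact LinearMap.mem_ker.mp this.2)
  have hee : e * e = e := by
    have hmem : e * e - e ∈ I ⊓ LinearMap.ker (rmul b') := by
      refine ⟨I.sub_mem (by simpa [smul_eq_mul] using I.smul_mem e heI) heI, ?_⟩
      refine LinearMap.mem_ker.mpr ?_
      show (e * e - e) * b' = 0
      rw [sub_mul, mul_assoc, heb', heb', sub_self]
    rw [hK] at hmem
    have := (Submodule.mem_bot A).mp hmem
    rwa [sub_eq_zero] at this
  -- span e = I, span b = I
  have hspan_e : Submodule.span A {e} = I :=
    atom_eq_of_le_ne_bot hI (by rwa [Submodule.span_singleton_le_iff_mem])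
      (by simpa [Submodule.span_singleton_eq_bot] using he0)
  have hspan_b : Submodule.span A {b} = I :=
    atom_eq_of_le_ne_bot hI (by rwa [Submodule.span_singleton_le_iff_mem])
      (by simpa [Submodule.span_singleton_eq_bot] using hb0)
  obtain ⟨u, hu⟩ := Submodule.mem_span_singleton.mp (hspan_e.symm ▸ hb : b ∈ Submodule.span A {e})
  obtain ⟨x, hx⟩ := Submodule.mem_span_singleton.mp (hspan_b.symm ▸ heI : e ∈ Submodule.span A {b})
  rw [smul_eq_mul] at hu hx
  have hbe : b * e = b := by
    rw [← hu, mul_assoc, hee]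
  exact ⟨x, by rw [mul_assoc, hx, hbe]⟩

end Reg
section Alg

variable {A : Type*} [Ring A]

lemma idem_combine {p h : A} (hpp : p * p = p) (hhh : h * h = h) (hph : p * h = 0) :
    (p + h - h * p) * (p + h - h * p) = p + h - h * p := by
  have f1 : p * (h * p) = 0 := by rw [← mul_assoc, hph, zero_mul]
  have f2 : h * (h * p) = h * p := by rw [← mul_assoc, hhh]
  have f3 : h * p * p = h * p := by rw [mul_assoc, hpp]
  have f4 : h * p * h = 0 := by rw [mul_assoc, hph, mul_zero]
  have f5 : h * p * (h * p) = 0 := by rw [← mul_assoc, f4, zero_mul]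
  have e1 : (p + h - h * p) * p = p := by
    rw [sub_mul, add_mul, hpp, f3, add_sub_cancel_right]
  have e2 : (p + h - h * p) * h = h := by
    rw [sub_mul, add_mul, hph, hhh, f4, zero_add, sub_zero]
  have e3 : (p + h - h * p) * (h * p) = h * p := by
    rw [sub_mul, add_mul, f1, f2, f5, zero_add, sub_zero]
  rw [mul_sub, mul_add, e1, e2, e3]

lemma unit_combine {p h b a : A} (hpp : p * p = p) (hpa : p * a = a)
    (hhg : h * (b - p * b) = b - p * b) :
    (p + h - h * p) * (b + a) = b + a := by
  have rb : (p + h - h * p) * b = b := by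
    rw [sub_mul, add_mul, mul_assoc, add_sub_assoc, ← mul_sub, hhg]
    abel
  have ra : (p + h - h * p) * a = a := by
    rw [sub_mul, add_mul, mul_assoc, hpa]
    abel
  rw [mul_add, rb, ra]

end Alg

section LeftUnit
variable {A : Type*} [Ring A]

lemma left_unit_of_finset (hA : ∀ a : A, (∀ x : A, a * x * a = 0) → a = 0)
    (F : Finset (Submodule A A)) (hF : ↑F ⊆ {m : Submodule A A | IsAtom m}) :
    ∀ s ∈ (⨆ i ∈ F, i : Submodule A A), ∃ r ∈ socle A, r * r = r ∧ r * s = s := by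
  classical
  induction F using Finset.induction_on with
  | empty =>
    intro s hs
    simp only [Finset.notMem_empty, iSup_false, iSup_bot, Submodule.mem_bot] at hs
    exact ⟨0, (socle A).zero_mem, by simp, by simp [hs]⟩
  | @insert I F hI ih =>
    intro s hs
    have hsub : ↑F ⊆ {m : Submodule A A | IsAtom m} := by
      intro m hm; exact hF (by simp [hm])
    have hIa : IsAtom I := hF (by simp)
    rw [Finset.iSup_insert] at hs
    obtain ⟨b, hb, a, ha, hba⟩ := Submodule.mem_sup.mp hs
    obtain ⟨p, hpsoc, hpp, hpa⟩ := ih hsub a ha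
    by_cases hg : b - p * b = 0
    · refine ⟨p, hpsoc, hpp, ?_⟩
      have hpb : p * b = b := by rwa [sub_eq_zero, eq_comm] at hg
      rw [← hba, mul_add, hpa, hpb]
    · have hgI : b - p * b ∈ I := I.sub_mem hb (by simpa [smul_eq_mul] using I.smul_mem p hb)
      obtain ⟨y, hy⟩ := atom_regular hA hIa hgI hg
      have hIsoc : I ≤ socle A := le_sSup hIa
      have hhsoc : (b - p * b) * y ∈ socle A := socle_mul_mem (hIsoc hgI) y
      have hhg : (b - p * b) * y * (b - p * b) = b - p * b := hy
      have hpg : p * (b - p * b) = 0 := by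
        rw [mul_sub, ← mul_assoc, hpp, sub_self]
      have hph : p * ((b - p * b) * y) = 0 := by rw [← mul_assoc, hpg, zero_mul]
      have hhh : (b - p * b) * y * ((b - p * b) * y) = (b - p * b) * y := by
        rw [← mul_assoc, hy]
      refine ⟨p + (b - p * b) * y - (b - p * b) * y * p, ?_, ?_, ?_⟩
      · exact (socle A).sub_mem ((socle A).add_mem hpsoc hhsoc)
          (by simpa [smul_eq_mul] using (socle A).smul_mem ((b - p * b) * y) hpsoc)
      · exact idem_combine hpp hhh hph
      · rw [← hba]
        exact unit_combine hpp hpa (by rw [mul_assoc] at hhg ⊢; exact hhg)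

lemma left_unit (hA : ∀ a : A, (∀ x : A, a * x * a = 0) → a = 0)
    {s : A} (hs : s ∈ socle A) : ∃ r ∈ socle A, r * r = r ∧ r * s = s := by
  obtain ⟨F, hFsub, hmem⟩ := Submodule.mem_sSup_iff_exists_finset.mp hs
  exact left_unit_of_finset hA F hFsub s hmem

end LeftUnit

theorem stmt1 (A : Type*) [Ring A] (hA : IsSemiprimeRing A) (L L' : Submodule A A)
    (hL : IsFredholmLeftIdeal L) (hL' : IsFredholmLeftIdeal L') :
    IsFredholmLeftIdeal (L ⊓ L') := by
  obtain ⟨a, haL, b, hab, hba⟩ := hL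
  obtain ⟨a', haL', b', hab', hba'⟩ := hL'
  -- s = 1 - b*a ∈ socle, with  b*a ∈ L
  have hs : (1 : A) - b * a ∈ socle A := by
    have := (socle A).neg_mem hba
    simpa [neg_sub] using this
  have hs' : (1 : A) - b' * a' ∈ socle A := by
    have := (socle A).neg_mem hba'
    simpa [neg_sub] using this
  obtain ⟨p, hpsoc, hpp, hps⟩ := left_unit hA hs
  -- g := s' - p * s'
  have hgsoc : ((1 : A) - b' * a') - p * ((1 : A) - b' * a') ∈ socle A :=
    (socle A).sub_mem hs' (by simpa [smul_eq_mul] using (socle A).smul_mem p hs')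
  obtain ⟨h, hhsoc, _, hhg⟩ := left_unit hA hgsoc
  set s : A := (1 : A) - b * a with hsdef
  set s' : A := (1 : A) - b' * a' with hs'def
  set r : A := p + h - h * p with hrdef
  have hrsoc : r ∈ socle A :=
    (socle A).sub_mem ((socle A).add_mem hpsoc hhsoc)
      (by simpa [smul_eq_mul] using (socle A).smul_mem h hpsoc)
  have hpg : p * (s' - p * s') = 0 := by rw [mul_sub, ← mul_assoc, hpp, sub_self]
  have hrs : r * s = s := by
    rw [hrdef, sub_mul, add_mul, hps, mul_assoc, hps]
    abel
  have hrs' : r * s' = s' := by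
    have : h * s' - h * (p * s') = s' - p * s' := by rw [← mul_sub, hhg]
    rw [hrdef, sub_mul, add_mul, mul_assoc, add_sub_assoc, this]
    abel
  -- the common Fredholm element 1 - r
  have hcL : (1 : A) - r ∈ L := by
    have h1 : ((1 : A) - r) * (b * a) = 1 - r := by
      have : (b : A) * a = 1 - s := by rw [hsdef]; abel
      rw [this, mul_sub, mul_one, sub_mul, one_mul, hrs]
      abel
    have : ((1 : A) - r) * (b * a) ∈ L := by
      simpa [smul_eq_mul, mul_assoc] using L.smul_mem ((1 : A) - r) (by simpa [smul_eq_mul] using L.smul_mem b haL)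
    rwa [h1] at this
  have hcL' : (1 : A) - r ∈ L' := by
    have h1 : ((1 : A) - r) * (b' * a') = 1 - r := by
      have : (b' : A) * a' = 1 - s' := by rw [hs'def]; abel
      rw [this, mul_sub, mul_one, sub_mul, one_mul, hrs']
      abel
    have : ((1 : A) - r) * (b' * a') ∈ L' := by
      simpa [smul_eq_mul, mul_assoc] using L'.smul_mem ((1 : A) - r) (by simpa [smul_eq_mul] using L'.smul_mem b' haL')
    rwa [h1] at this
  refine ⟨1 - r, ⟨hcL, hcL'⟩, 1, ?_, ?_⟩
  · simpa using (socle A).neg_mem hrsoc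
  · simpa using (socle A).neg_mem hrsoc
end

section
/- Let A be a semiprime unital ring and L ⊆ A a left ideal. Then L is a finite sum of minimal left ideals if and only if L has finite length as a left A-module, and in that case the minimal number of minimal left ideals needed to sum to L equals the length of L. -/
open MulOpposite Submodule

/-! ### Auxiliary lemmas -/

section MlenAux

lemma mlen_eq_iSup (R M : Type*) [Ring R] [AddCommGroup M] [Module R M] :
    mlen R M = ⨆ p : LTSeries (Submodule R M), (p.length : ℕ∞) := by
  have : Nonempty (Submodule R M) := ⟨⊥⟩
  rw [mlen, Order.krullDim_eq_iSup_length, WithBot.unbotD_coe]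

end MlenAux

section LatticeAux

variable {α : Type*} [CompleteLattice α] [IsModularLattice α]

set_option linter.unusedSectionVars false

/-- Restricting a chain bound from `L` to a strictly smaller element. -/
lemma bound_of_lt {N : ℕ} {L L' : α} (h : L' < L)
    (hbound : ∀ (k : ℕ) (x : Fin (k+1) → α), StrictMono x → (∀ i, x i ≤ L) → k ≤ N + 1) :
    ∀ (k : ℕ) (x : Fin (k+1) → α), StrictMono x → (∀ i, x i ≤ L') → k ≤ N := by
  intro k x hx hxle
  have hkk := hbound (k+1) (Fin.snoc x L) ?_ ?_
  · omega
  · refine Fin.strictMono_iff_lt_succ.mpr fun i => ?_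
    induction i using Fin.lastCases with
    | last =>
      rw [Fin.succ_last, Fin.snoc_castSucc, Fin.snoc_last]
      exact (hxle _).trans_lt h
    | cast i =>
      rw [Fin.succ_castSucc, Fin.snoc_castSucc, Fin.snoc_castSucc]
      exact hx (Fin.castSucc_lt_succ (i := i))
  · intro i
    induction i using Fin.lastCases with
    | last => simp
    | cast i => rw [Fin.snoc_castSucc]; exact (hxle i).trans h.le

/-- In a modular lattice, chains below a supremum of `n` atoms have length at most `n`. -/
lemma chainBound :
    ∀ (n : ℕ) (m : Fin n → α), (∀ i, IsAtom (m i)) →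
      ∀ (k : ℕ) (x : Fin (k+1) → α), StrictMono x → (∀ i, x i ≤ ⨆ i, m i) → k ≤ n := by
  intro n
  induction n with
  | zero =>
    intro m _ k x hx hxle
    by_contra hk
    push_neg at hk
    have h01 : x ⟨0, by omega⟩ < x ⟨1, by omega⟩ := hx (by simp [Fin.lt_def])
    have hb : x ⟨1, by omega⟩ ≤ ⊥ := (hxle _).trans (by rw [iSup_of_empty])
    exact absurd ((h01.trans_le hb).trans_le bot_le) (lt_irrefl _)
  | succ n ih =>
    intro m hm k x hx hxle
    set L' := ⨆ i : Fin n, m i.castSucc with hL'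
    set a := m (Fin.last n) with ha
    have hsupp : (⨆ i, m i) = L' ⊔ a := by
      apply le_antisymm
      · refine iSup_le fun i => ?_
        induction i using Fin.lastCases with
        | last => exact le_sup_right
        | cast i => exact (le_iSup (fun j : Fin n => m j.castSucc) i).trans le_sup_left
      · exact sup_le (iSup_le fun i => le_iSup m i.castSucc) (le_iSup m (Fin.last n))
    by_cases haL : a ≤ L'
    · have hle : (⨆ i, m i) ≤ L' := by rw [hsupp]; exact sup_le le_rfl haL
      exact (ih (fun i => m i.castSucc) (fun i => hm _) k x hx
        (fun i => (hxle i).trans hle)).trans (Nat.le_succ n)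
    · have two : ∀ z : α, L' ≤ z → z ≤ L' ⊔ a → z = L' ∨ z = L' ⊔ a := by
        intro z h1 h2
        have hz : z = L' ⊔ a ⊓ z := by
          rw [← sup_inf_assoc_of_le a h1]
          exact (inf_eq_right.mpr h2).symm
        rcases (hm (Fin.last n)).le_iff.mp (inf_le_left : a ⊓ z ≤ a) with h | h
        · left; rw [hz, h, sup_bot_eq]
        · right; rw [hz, h]
      set y : Fin (k+1) → α := fun i => x i ⊓ L' with hy
      have hymono : Monotone y := fun i j hij => inf_le_inf_right L' (hx.monotone hij)
      have hu2 : ∀ i, x i ⊔ L' = L' ∨ x i ⊔ L' = L' ⊔ a := by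
        intro i
        exact two (x i ⊔ L') le_sup_right
          (sup_le (((hxle i).trans_eq hsupp)) le_sup_left)
      have hbadu : ∀ j : Fin k, y j.castSucc = y j.succ →
          x j.castSucc ⊔ L' = L' ∧ x j.succ ⊔ L' = L' ⊔ a := by
        intro j hj
        have hne : x j.castSucc ⊔ L' ≠ x j.succ ⊔ L' := by
          intro hu
          refine (hx (Fin.castSucc_lt_succ (i := j))).ne ?_
          exact eq_of_le_of_inf_le_of_sup_le (hx (Fin.castSucc_lt_succ (i := j))).le hj.ge hu.ge
        have hule : x j.castSucc ⊔ L' ≤ x j.succ ⊔ L' :=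
          sup_le_sup_right (hx (Fin.castSucc_lt_succ (i := j))).le L'
        rcases hu2 j.castSucc with h1 | h1 <;> rcases hu2 j.succ with h2 | h2
        · exact absurd (h1.trans h2.symm) hne
        · exact ⟨h1, h2⟩
        · exact absurd (le_sup_right.trans ((h1 ▸ hule).trans h2.le)) haL
        · exact absurd (h1.trans h2.symm) hne
      have huniq : ∀ j1 j2 : Fin k, y j1.castSucc = y j1.succ → y j2.castSucc = y j2.succ →
          ¬ j1 < j2 := by
        intro j1 j2 h1 h2 hlt
        have e1 := (hbadu j1 h1).2
        have e2 := (hbadu j2 h2).1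
        have hle12 : x j1.succ ⊔ L' ≤ x j2.castSucc ⊔ L' := by
          refine sup_le_sup_right (hx.monotone ?_) L'
          have hv := Fin.lt_def.mp hlt
          simp only [Fin.le_def, Fin.val_succ, Fin.coe_castSucc]
          omega
        rw [e1, e2] at hle12
        exact haL (le_sup_right.trans hle12)
      by_cases hbad : ∃ j : Fin k, y j.castSucc = y j.succ
      · obtain ⟨j, hj⟩ := hbad
        cases k with
        | zero => exact j.elim0
        | succ k' =>
          have hstep : ∀ i : Fin (k'+1), i ≠ j → y i.castSucc < y i.succ := by
            intro i hi
            refine lt_of_le_of_ne (hymono (Fin.castSucc_le_succ i)) fun h => ?_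
            rcases lt_trichotomy i j with h' | h' | h'
            · exact huniq i j h hj h'
            · exact hi h'
            · exact huniq j i hj h h'
          have hylt : ∀ p q : Fin (k'+2), p < q → (p : ℕ) ≠ (j : ℕ) → y p < y q := by
            intro p q hpq hpj
            have hp : (p : ℕ) < k' + 1 := by
              have := hpq
              rw [Fin.lt_def] at this
              omega
            have hpc : (⟨(p : ℕ), hp⟩ : Fin (k'+1)).castSucc = p := by ext; rfl
            have hstep' := hstep ⟨(p : ℕ), hp⟩ (fun h => hpj (congrArg Fin.val h))
            rw [hpc] at hstep'
            refine hstep'.trans_le (hymono ?_)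
            rw [Fin.le_def]
            simp only [Fin.val_succ]
            rw [Fin.lt_def] at hpq
            omega
          set z : Fin (k'+1) → α := fun i => y (j.castSucc.succAbove i) with hz
          have hzmono : StrictMono z := by
            intro i1 i2 h12
            refine hylt _ _ (Fin.strictMono_succAbove _ h12) fun h => ?_
            have : j.castSucc.succAbove i1 = j.castSucc := by ext; exact h
            exact Fin.succAbove_ne _ i1 this
          have := ih (fun i => m i.castSucc) (fun i => hm _) k' z hzmono
            (fun i => inf_le_right)
          omega
      · push_neg at hbad
        have hystrict : StrictMono y := Fin.strictMono_iff_lt_succ.mpr fun i =>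
          lt_of_le_of_ne (hymono (Fin.castSucc_le_succ i)) (hbad i)
        have := ih (fun i => m i.castSucc) (fun i => hm _) k y hystrict
          (fun i => inf_le_right)
        omega

/-- An element admitting a chain bound and distinct from `⊥` lies above an atom. -/
lemma exists_atom_le' : ∀ (N : ℕ) (C : α), C ≠ ⊥ →
    (∀ (k : ℕ) (x : Fin (k+1) → α), StrictMono x → (∀ i, x i ≤ C) → k ≤ N) →
    ∃ a ≤ C, IsAtom a := by
  intro N
  induction N with
  | zero =>
    intro C hC hbound
    exfalso
    have h2 := hbound 1 (fun i => if i = 0 then ⊥ else C) ?_ ?_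
    · omega
    · intro i j hij
      fin_cases i <;> fin_cases j <;> simp_all [hC.bot_lt, Fin.lt_def]
    · intro i
      split
      · exact bot_le
      · exact le_rfl
  | succ N ihN =>
    intro C hC hbound
    by_cases hCatom : IsAtom C
    · exact ⟨C, le_rfl, hCatom⟩
    · have hex : ∃ C', C' < C ∧ C' ≠ ⊥ := by
        by_contra h
        push_neg at h
        exact hCatom ⟨hC, fun b hb => h b hb⟩
      obtain ⟨C', hlt, hC'0⟩ := hex
      obtain ⟨a, haC', ha⟩ := ihN C' hC'0 (bound_of_lt hlt hbound)
      exact ⟨a, haC'.trans hlt.le, ha⟩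

end LatticeAux

section RingAux

variable {A : Type*} [Ring A]

lemma mem_lAnn_singleton {e a : A} : a ∈ lAnn {e} ↔ a * e = 0 := by
  constructor
  · intro h; exact h e rfl
  · intro h s hs; rw [Set.mem_singleton_iff] at hs; rw [hs]; exact h

/-- Brauer's lemma: in a semiprime ring, a minimal left ideal is generated by
an idempotent. -/
lemma brauer (hA : IsSemiprimeRing A) {M : Submodule A A} (hM : IsAtom M) :
    ∃ e : A, e ∈ M ∧ e * e = e ∧ e ≠ 0 ∧ M = Submodule.span A {e} := by
  obtain ⟨a, haM, ha0⟩ := (Submodule.ne_bot_iff M).mp hM.1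
  obtain ⟨x, hx⟩ : ∃ x, a * x * a ≠ 0 := by
    by_contra h; push_neg at h; exact ha0 (hA a h)
  have hbM : x * a ∈ M := M.smul_mem x haM
  set b := x * a with hb
  have hab : a * b ≠ 0 := by rw [hb, ← mul_assoc]; exact hx
  have hb0 : b ≠ 0 := fun h => hab (by rw [h, mul_zero])
  have hreg : ∀ m ∈ M, m * b = 0 → m = 0 := by
    intro m hm hmb
    have hlt : M ⊓ lAnn {b} < M := by
      refine lt_of_le_of_ne inf_le_left (fun h => hab ?_)
      have : a ∈ M ⊓ lAnn {b} := h.symm ▸ haM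
      exact mem_lAnn_singleton.mp this.2
    have hbot := hM.2 _ hlt
    have : m ∈ M ⊓ lAnn {b} := ⟨hm, mem_lAnn_singleton.mpr hmb⟩
    rw [hbot] at this
    exact this
  let f : A →ₗ[A] A :=
    { toFun := fun y => y * b
      map_add' := fun y z => add_mul y z b
      map_smul' := fun c y => by simp [smul_eq_mul, mul_assoc] }
  have hmaple : M.map f ≤ M := by
    rintro _ ⟨m, hm, rfl⟩
    exact M.smul_mem m hbM
  have hmapne : M.map f ≠ ⊥ := by
    intro h
    apply hab
    have : a * b ∈ M.map f := ⟨a, haM, rfl⟩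
    rw [h] at this
    exact this
  have hmap : M.map f = M := (hM.le_iff.mp hmaple).resolve_left hmapne
  obtain ⟨e, heM, heb⟩ : ∃ e ∈ M, e * b = b := by
    have : b ∈ M.map f := hmap.symm ▸ hbM
    obtain ⟨e, he, heb⟩ := this
    exact ⟨e, he, heb⟩
  have he0 : e ≠ 0 := fun h => hb0 (by rw [← heb, h, zero_mul])
  have hee : e * e = e := by
    have h1 : (e * e - e) * b = 0 := by
      rw [sub_mul, mul_assoc, heb, heb, sub_self]
    have h2 : e * e - e ∈ M := M.sub_mem (M.smul_mem e heM) heM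
    exact sub_eq_zero.mp (hreg _ h2 h1)
  refine ⟨e, heM, hee, he0, ?_⟩
  have hle : Submodule.span A {e} ≤ M := span_le.mpr (Set.singleton_subset_iff.mpr heM)
  have hne : Submodule.span A {e} ≠ ⊥ := by
    intro h
    apply he0
    have : e ∈ Submodule.span A {e} := mem_span_singleton_self e
    rw [h] at this
    exact this
  exact ((hM.le_iff.mp hle).resolve_left hne).symm

/-- In a semiprime ring, a left ideal with bounded chains is a finite sup of atoms. -/
lemma decomp (hA : IsSemiprimeRing A) : ∀ (N : ℕ) (L : Submodule A A),
    (∀ (k : ℕ) (x : Fin (k+1) → Submodule A A), StrictMono x → (∀ i, x i ≤ L) → k ≤ N) →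
    ∃ n : ℕ, ∃ m : Fin n → Submodule A A, (∀ i, IsAtom (m i)) ∧ L = ⨆ i, m i := by
  intro N
  induction N with
  | zero =>
    intro L hbound
    by_cases hL : L = ⊥
    · exact ⟨0, Fin.elim0, fun i => i.elim0, by rw [hL]; exact (iSup_of_empty _).symm⟩
    · exfalso
      have h2 := hbound 1 (fun i => if i = 0 then ⊥ else L) ?_ ?_
      · omega
      · intro i j hij
        fin_cases i <;> fin_cases j <;> simp_all [Ne.bot_lt hL, Fin.lt_def]
      · intro i
        split
        · exact bot_le
        · exact le_rfl
  | succ N ihN =>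
    intro L hbound
    by_cases hL : L = ⊥
    · exact ⟨0, Fin.elim0, fun i => i.elim0, by rw [hL]; exact (iSup_of_empty _).symm⟩
    · obtain ⟨M, hML, hMatom⟩ := exists_atom_le' (N+1) L hL hbound
      obtain ⟨e, heM, hee, he0, hMspan⟩ := brauer hA hMatom
      set L'' := L ⊓ lAnn {e} with hLdef
      have hL''lt : L'' < L := by
        refine lt_of_le_of_ne inf_le_left fun h => he0 ?_
        have heL : e ∈ L'' := h.symm ▸ (hML heM)
        have := mem_lAnn_singleton.mp heL.2
        rw [hee] at this; exact this
      have hsum : L = M ⊔ L'' := by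
        refine le_antisymm ?_ (sup_le hML inf_le_left)
        intro v hv
        rw [Submodule.mem_sup]
        refine ⟨v * e, M.smul_mem v heM, v - v * e,
          ⟨L.sub_mem hv (hML (M.smul_mem v heM)),
            mem_lAnn_singleton.mpr (by rw [sub_mul, mul_assoc, hee, sub_self])⟩, by abel⟩
      obtain ⟨n, m, hm, hLm⟩ := ihN L'' (bound_of_lt hL''lt hbound)
      refine ⟨n+1, Fin.cons M m, fun i => ?_, ?_⟩
      · induction i using Fin.cases with
        | zero => simpa using hMatom
        | succ j => simpa using hm j
      · rw [hsum, hLm]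
        apply le_antisymm
        · refine sup_le ?_ (iSup_le fun j => ?_)
          · simpa using le_iSup (Fin.cons M m) 0
          · simpa using le_iSup (Fin.cons M m) j.succ
        · refine iSup_le fun i => ?_
          induction i using Fin.cases with
          | zero => simpa using le_sup_left
          | succ j =>
            refine le_trans ?_ le_sup_right
            simpa using le_iSup m j

/-- Transfer a chain of submodules of `A` below `L` into a lower bound for `mlen A L`. -/
lemma le_mlen_of_chain {L : Submodule A A} {k : ℕ} (x : Fin (k+1) → Submodule A A)
    (hx : StrictMono x) (hxle : ∀ i, x i ≤ L) : (k : ℕ∞) ≤ mlen A L := by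
  have hinj : ∀ i j, (x i).comap L.subtype = (x j).comap L.subtype → x i = x j := by
    intro i j hij
    have := congrArg (Submodule.map L.subtype) hij
    rwa [Submodule.map_comap_subtype, Submodule.map_comap_subtype,
      inf_eq_right.mpr (hxle i), inf_eq_right.mpr (hxle j)] at this
  set p : LTSeries (Submodule A L) :=
    ⟨k, fun i => (x i).comap L.subtype, fun i => lt_of_le_of_ne
      (Submodule.comap_mono (hx (Fin.castSucc_lt_succ (i := i))).le)
      (fun hh => (hx (Fin.castSucc_lt_succ (i := i))).ne (hinj _ _ hh))⟩ with hp
  have hle := le_iSup (fun q : LTSeries (Submodule A L) => (q.length : ℕ∞)) p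
  rw [← mlen_eq_iSup] at hle
  exact hle

/-- Chains in `A` below `L` are bounded by any bound on `mlen A L`. -/
lemma bound_of_mlen_le {L : Submodule A A} {N : ℕ} (h : mlen A L ≤ N) :
    ∀ (k : ℕ) (x : Fin (k+1) → Submodule A A), StrictMono x → (∀ i, x i ≤ L) → k ≤ N := by
  intro k x hx hxle
  have := (le_mlen_of_chain x hx hxle).trans h
  exact_mod_cast this

/-- Any chain bound on submodules of `A` below `L` bounds `mlen A L`. -/
lemma mlen_le_of_bound {L : Submodule A A} {N : ℕ}
    (h : ∀ (k : ℕ) (x : Fin (k+1) → Submodule A A), StrictMono x → (∀ i, x i ≤ L) → k ≤ N) :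
    mlen A L ≤ N := by
  rw [mlen_eq_iSup]
  refine iSup_le fun p => ?_
  have hb := h p.length (fun i => (p i).map L.subtype)
    (fun i j hij => lt_of_le_of_ne (Submodule.map_mono (p.strictMono hij).le)
      (fun hh => (p.strictMono hij).ne
        (Submodule.map_injective_of_injective L.injective_subtype hh)))
    (fun i => Submodule.map_subtype_le L _)
  exact_mod_cast Nat.cast_le.mpr hb

end RingAux

theorem stmt2 (A : Type*) [Ring A] (hA : IsSemiprimeRing A) (L : Submodule A A) :
    ((∃ n : ℕ, ∃ m : Fin n → Submodule A A, (∀ i, IsAtom (m i)) ∧ L = ⨆ i, m i) ↔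
      mlen A L ≠ ⊤) ∧
    ((∃ n : ℕ, ∃ m : Fin n → Submodule A A, (∀ i, IsAtom (m i)) ∧ L = ⨆ i, m i) →
      ((sInf {n : ℕ | ∃ m : Fin n → Submodule A A, (∀ i, IsAtom (m i)) ∧ L = ⨆ i, m i} : ℕ) : ℕ∞)
        = mlen A L) := by
  have bound_of_decomp : ∀ (n : ℕ) (m : Fin n → Submodule A A), (∀ i, IsAtom (m i)) →
      L = ⨆ i, m i →
      ∀ (k : ℕ) (x : Fin (k+1) → Submodule A A), StrictMono x → (∀ i, x i ≤ L) → k ≤ n := by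
    intro n m hm hLm k x hx hxle
    exact chainBound n m hm k x hx (fun i => (hxle i).trans_eq hLm)
  constructor
  · constructor
    · rintro ⟨n, m, hm, hLm⟩
      exact ne_top_of_le_ne_top (WithTop.natCast_ne_top n)
        (mlen_le_of_bound (bound_of_decomp n m hm hLm))
    · intro hne
      obtain ⟨N, hN⟩ := WithTop.ne_top_iff_exists.mp hne
      exact decomp hA N L (bound_of_mlen_le hN.ge)
  · intro hP
    set S := {n : ℕ | ∃ m : Fin n → Submodule A A, (∀ i, IsAtom (m i)) ∧ L = ⨆ i, m i} with hSdef
    have key : ∀ (n : ℕ) (m : Fin n → Submodule A A), (∀ i, IsAtom (m i)) → L = ⨆ i, m i →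
        (∀ n' : ℕ, n' < n → n' ∉ S) → (n : ℕ∞) ≤ mlen A L := by
      intro n m hm hLm hmin
      set s : Fin (n+1) → Submodule A A :=
        fun c => ⨆ i : Fin n, ⨆ _ : (i : ℕ) < (c : ℕ), m i with hs
      have hle_s : ∀ (c : Fin (n+1)) (i : Fin n), (i : ℕ) < (c : ℕ) → m i ≤ s c :=
        fun c i hi => le_iSup_of_le i (le_iSup_of_le hi le_rfl)
      have hs_le : ∀ c, s c ≤ L :=
        fun c => iSup_le fun i => iSup_le fun _ => (le_iSup m i).trans hLm.ge
      have hsmono : Monotone s := by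
        intro c1 c2 h
        exact iSup_le fun i => iSup_le fun hi => hle_s c2 i (lt_of_lt_of_le hi (Fin.le_def.mp h))
      have hsne : ∀ c : Fin n, s c.castSucc ≠ s c.succ := by
        intro c h
        have hmc : m c ≤ s c.castSucc := by
          rw [h]
          exact hle_s c.succ c (by simp [Fin.lt_def])
        cases n with
        | zero => exact c.elim0
        | succ n' =>
          have hother : ∀ j : Fin (n'+1), j ≠ c → m j ≤ ⨆ i : Fin n', m (c.succAbove i) := by
            intro j hj
            have : j ∈ Set.range c.succAbove := by rw [Fin.range_succAbove]; exact hj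
            obtain ⟨i, rfl⟩ := this
            exact le_iSup (fun i => m (c.succAbove i)) i
          have hcle : m c ≤ ⨆ i : Fin n', m (c.succAbove i) := by
            refine hmc.trans (iSup_le fun i => iSup_le fun hi => hother i fun he => ?_)
            rw [he] at hi
            exact absurd hi (lt_irrefl _)
          have hLm' : L = ⨆ i : Fin n', m (c.succAbove i) := by
            refine le_antisymm ?_ (iSup_le fun i => (le_iSup m _).trans hLm.ge)
            rw [hLm]
            refine iSup_le fun j => ?_
            by_cases hj : j = c
            · rw [hj]; exact hcle
            · exact hother j hj
          exact hmin n' (Nat.lt_succ_self n') ⟨fun i => m (c.succAbove i), fun i => hm _, hLm'⟩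
      have hsstrict : StrictMono s := Fin.strictMono_iff_lt_succ.mpr fun c =>
        lt_of_le_of_ne (hsmono (Fin.castSucc_le_succ c)) (hsne c)
      exact le_mlen_of_chain s hsstrict hs_le
    have hSne : S.Nonempty := hP
    obtain ⟨m, hm, hLm⟩ := Nat.sInf_mem hSne
    refine le_antisymm
      (key (sInf S) m hm hLm fun n' hn' => Nat.notMem_of_lt_sInf hn')
      (mlen_le_of_bound (bound_of_decomp (sInf S) m hm hLm))
end

section
/- Let A be a semiprime unital ring and L ⊆ A a left ideal. Then L is Fredholm (contains an element invertible modulo soc(A)) if and only if len(A/L) ≤ len(Ran(L)) < ∞, where Ran(L) = {a ∈ A : sa = 0 for all s ∈ L}. Moreover, in that case len(A/L) = len(Ran(L)). -/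
open MulOpposite Submodule

open Order
open scoped Classical

namespace FredAux



section OrderUtil

variable {α : Type*}

/-- Lift an LTSeries whose elements satisfy a predicate to the subtype. -/
def liftSeries [Preorder α] {P : α → Prop} (p : LTSeries α) (hp : ∀ i, P (p.toFun i)) :
    LTSeries {x : α // P x} :=
  LTSeries.mk p.length (fun i => ⟨p.toFun i, hp i⟩) (fun i j h => p.strictMono h)

@[simp] lemma liftSeries_length [Preorder α] {P : α → Prop} (p : LTSeries α)
    (hp : ∀ i, P (p.toFun i)) : (liftSeries p hp).length = p.length := rfl

lemma coheight_eq_height_subtype [Preorder α] [OrderTop α] (a : α) :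
    height (⟨⊤, le_top⟩ : {x : α // a ≤ x}) = coheight a := by
  apply le_antisymm
  · apply height_le
    intro p _
    have := LTSeries.map p Subtype.val (fun _ _ h => h)
    have hh : a ≤ (p.map Subtype.val (fun _ _ h => h)).head := by
      exact p.head.2
    exact length_le_coheight hh
  · rw [coheight_le_iff']
    intro p hhead
    have hp : ∀ i, a ≤ p.toFun i := fun i => by
      rw [← hhead]; exact p.monotone (Fin.zero_le i)
    exact length_le_height (x := (⟨⊤, le_top⟩ : {x : α // a ≤ x}))
      (p := liftSeries p hp) le_top

lemma height_eq_height_subtype [Preorder α] (b : α) (hb : b ≤ b) :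
    height (⟨b, hb⟩ : {x : α // x ≤ b}) = height b := by
  apply le_antisymm
  · apply height_le
    intro p hlast
    have hl : (p.map Subtype.val (fun _ _ h => h)).last ≤ b := by
      exact le_of_eq (congrArg Subtype.val hlast)
    exact length_le_height hl
  · apply height_le
    intro p hlast
    have hp : ∀ i, p.toFun i ≤ b := fun i => by
      rw [← hlast]; exact p.monotone (Fin.le_last i)
    exact length_le_height (x := (⟨b, hb⟩ : {x : α // x ≤ b}))
      (p := liftSeries p hp) (hp _)

lemma coheight_bot_subtype [Preorder α] [OrderBot α] (b : α) :
    coheight (⟨⊥, bot_le⟩ : {x : α // x ≤ b}) = height b := by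
  apply le_antisymm
  · rw [coheight_le_iff']
    intro p hhead
    have hl : (p.map Subtype.val (fun _ _ h => h)).last ≤ b := by
      exact p.last.2
    exact length_le_height hl
  · apply height_le
    intro p hlast
    have hp : ∀ i, p.toFun i ≤ b := fun i => by
      rw [← hlast]; exact p.monotone (Fin.le_last i)
    exact length_le_coheight (x := (⟨⊥, bot_le⟩ : {x : α // x ≤ b}))
      (p := liftSeries p hp) bot_le

end OrderUtil

section Mlen

variable {R M : Type*} [Ring R] [AddCommGroup M] [Module R M]

lemma mlen_eq_height : mlen R M = height (⊤ : Submodule R M) := by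
  rw [mlen, ← height_top_eq_krullDim, WithBot.unbotD_coe]

lemma mlen_quot (p : Submodule R M) : mlen R (M ⧸ p) = coheight p := by
  rw [mlen_eq_height]
  have h1 : height ((comapMkQRelIso p) ⊤) = height (⊤ : Submodule R (M ⧸ p)) :=
    height_orderIso _ _
  have h2 : ((comapMkQRelIso p) ⊤) = ⟨⊤, Set.mem_Ici.mpr le_top⟩ := by
    apply Subtype.ext
    simp [comapMkQRelIso]
  rw [← h1, h2]
  exact coheight_eq_height_subtype p

lemma mlen_sub (p : Submodule R M) : mlen R p = height p := by
  rw [mlen_eq_height]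
  have h1 : height ((Submodule.MapSubtype.orderIso p) ⊤) = height (⊤ : Submodule R p) :=
    height_orderIso _ _
  have h2 : ((Submodule.MapSubtype.orderIso p) ⊤) = ⟨p, le_rfl⟩ := by
    apply Subtype.ext
    simp [Submodule.MapSubtype.orderIso]
  rw [← h1, h2]
  exact height_eq_height_subtype p le_rfl

end Mlen

section ModularUtil

variable {α : Type*} [Lattice α] [IsModularLattice α]

lemma eq_of_le_of_inf_sup_eq {x y b : α} (hxy : x ≤ y) (hinf : x ⊓ b = y ⊓ b)
    (hsup : x ⊔ b = y ⊔ b) : x = y := by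
  have h1 : y ≤ x ⊔ b := hsup ▸ le_sup_left
  have h2 : (x ⊔ b) ⊓ y = x ⊔ (b ⊓ y) := sup_inf_assoc_of_le _ hxy
  have h3 : (x ⊔ b) ⊓ y = y := inf_eq_right.mpr h1
  have h4 : b ⊓ y = x ⊓ b := by rw [inf_comm, hinf, inf_comm]
  have h5 : y = x ⊔ (x ⊓ b) := by rw [← h4, ← h2, h3]
  rw [h5, sup_eq_left.mpr inf_le_left]

lemma interval_atom {a X c : α} [OrderBot α] (ha : IsAtom a) (h1 : X ≤ c) (h2 : c ≤ X ⊔ a) :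
    c = X ∨ c = X ⊔ a := by
  have hmod : (X ⊔ a) ⊓ c = X ⊔ (a ⊓ c) := sup_inf_assoc_of_le a h1
  rw [inf_comm, inf_eq_left.mpr h2] at hmod
  rcases ha.le_iff.mp (inf_le_left : a ⊓ c ≤ a) with h | h
  · left; rw [hmod, h, sup_bot_eq]
  · right; rw [hmod, h]

lemma exists_atom_le [OrderBot α] : ∀ (n : ℕ) (x : α), height x ≤ (n : ℕ∞) → x ≠ ⊥ →
    ∃ a, IsAtom a ∧ a ≤ x := by
  intro n
  induction n with
  | zero =>
    intro x hx hne
    exfalso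
    have h1 : (((RelSeries.singleton {(a, b) : α × α | a < b} (⊥ : α)).snoc x (Ne.bot_lt hne)).length : ℕ∞) ≤
        height (((RelSeries.singleton {(a, b) : α × α | a < b} (⊥ : α)).snoc x (Ne.bot_lt hne)).last) :=
      length_le_height_last
    change ((1 : ℕ) : ℕ∞) ≤ height x at h1
    simp at h1
    have := h1.trans hx
    norm_num at this
  | succ n ih =>
    intro x hx hne
    by_cases hax : IsAtom x
    · exact ⟨x, hax, le_rfl⟩
    · have : ∃ y, y < x ∧ y ≠ ⊥ := by
        by_contra h
        push_neg at h
        exact hax ⟨hne, fun b hb => h b hb⟩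
      obtain ⟨y, hyx, hy⟩ := this
      have h1 : height y < height x := by
        apply height_strictMono hyx
        exact lt_of_le_of_lt (height_mono hyx.le |>.trans hx) (ENat.coe_lt_top _)
      have h2 : height y ≤ (n : ℕ∞) := by
        have h3 := lt_of_lt_of_le h1 hx
        rw [Nat.cast_succ] at h3
        exact Order.le_of_lt_add_one h3
      obtain ⟨a, ha, hay⟩ := ih y h2 hy
      exact ⟨a, ha, hay.trans hyx.le⟩

end ModularUtil



section ModularUtil

variable {α : Type*} [Lattice α] [IsModularLattice α]

variable [OrderBot α]

lemma height_core_atom {a X : α} (ha : IsAtom a) :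
    ∀ (n : ℕ) (p : LTSeries α), p.length = n → p.last ≤ X ⊔ a →
      (p.length : ℕ∞) ≤ height (p.last ⊓ X) + (if p.last ≤ X then 0 else 1) := by
  intro n
  induction n with
  | zero => intro p hp _; rw [hp]; simp
  | succ n ih =>
    intro p hp hlast
    have hlen0 : p.length ≠ 0 := by omega
    set q := p.eraseLast with hq
    have hqlen : q.length = n := by simp [hq, RelSeries.eraseLast, hp]
    have hlt : q.last < p.last := p.eraseLast_last_rel_last hlen0
    have hqlast : q.last ≤ X ⊔ a := hlt.le.trans hlast
    have IH := ih q hqlen hqlast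
    rw [hqlen] at IH
    rw [hp]
    set x := q.last
    set y := p.last
    have hinfmono : x ⊓ X ≤ y ⊓ X := inf_le_inf_right X hlt.le
    have harith : ∀ (c : ℕ∞), (n : ℕ∞) ≤ c → ((n+1 : ℕ) : ℕ∞) ≤ c + 1 := by
      intro c hc
      calc ((n+1 : ℕ) : ℕ∞) = (n : ℕ∞) + 1 := by push_cast; ring
        _ ≤ c + 1 := add_le_add_left hc 1
    by_cases htop : height (x ⊓ X) = ⊤
    · have hy : height (y ⊓ X) = ⊤ := top_le_iff.mp (htop ▸ height_mono hinfmono)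
      rw [hy]
      exact le_trans (le_top) (by simp)
    have hfin : height (x ⊓ X) < ⊤ := lt_top_iff_ne_top.mpr htop
    by_cases hyX : y ≤ X
    · have hxX : x ≤ X := hlt.le.trans hyX
      rw [if_pos hyX, add_zero]
      rw [if_pos hxX, add_zero] at IH
      have hxeq : x ⊓ X = x := inf_eq_left.mpr hxX
      have hyeq : y ⊓ X = y := inf_eq_left.mpr hyX
      have hstrict : height (x ⊓ X) < height (y ⊓ X) := by
        rw [hxeq, hyeq]
        exact height_strictMono hlt (by rwa [hxeq] at hfin)
      have h2 := (ENat.add_one_le_iff htop).mpr hstrict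
      exact le_trans (harith _ IH) h2
    · rw [if_neg hyX]
      by_cases hxX : x ≤ X
      · rw [if_pos hxX, add_zero] at IH
        exact harith _ (IH.trans (height_mono hinfmono))
      · rw [if_neg hxX] at IH
        have hstrict : x ⊓ X < y ⊓ X := by
          rcases lt_or_eq_of_le hinfmono with h | h
          · exact h
          · exfalso
            have hxsup : x ⊔ X = X ⊔ a := by
              rcases interval_atom ha le_sup_right
                (sup_le hqlast le_sup_left : x ⊔ X ≤ X ⊔ a) with h' | h'
              · exact absurd (le_sup_left.trans h'.le) hxX
              · exact h'
            have hysup : y ⊔ X = X ⊔ a := by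
              rcases interval_atom ha le_sup_right
                (sup_le hlast le_sup_left : y ⊔ X ≤ X ⊔ a) with h' | h'
              · exact absurd (le_sup_left.trans h'.le) hyX
              · exact h'
            exact hlt.ne (eq_of_le_of_inf_sup_eq hlt.le h (hxsup.trans hysup.symm))
        have h2 := (ENat.add_one_le_iff htop).mpr (height_strictMono hstrict hfin)
        exact le_trans (harith _ IH) (add_le_add_left h2 1)

lemma height_sup_atom_le {a X : α} (ha : IsAtom a) : height (X ⊔ a) ≤ height X + 1 := by
  by_cases haX : a ≤ X
  · rw [sup_eq_left.mpr haX]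
    exact le_add_right le_rfl
  · apply height_le
    intro p hlast
    have := height_core_atom ha p.length p rfl hlast.le
    rw [hlast] at this
    have hXa : ¬ (X ⊔ a ≤ X) := fun h => haX (le_sup_right.trans h)
    rw [if_neg hXa, inf_comm, inf_eq_left.mpr (le_sup_left : X ≤ X ⊔ a)] at this
    exact this

lemma height_finsetSup_atoms_le (t : Finset α) (ht : ∀ m ∈ t, IsAtom m) :
    height (t.sup id) ≤ (t.card : ℕ∞) := by
  induction t using Finset.induction_on with
  | empty => simp
  | @insert a s ha ih =>
    rw [Finset.sup_insert, Finset.card_insert_of_notMem ha]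
    have h1 : height (s.sup id ⊔ (id a)) ≤ height (s.sup id) + 1 :=
      height_sup_atom_le (ht a (Finset.mem_insert_self a s))
    rw [sup_comm] at h1
    refine h1.trans ?_
    have := ih (fun m hm => ht m (Finset.mem_insert_of_mem hm))
    push_cast
    exact add_le_add_left this 1

lemma exists_compl_aux (t : Finset α) (ht : ∀ m ∈ t, IsAtom m) (K : α) :
    ∃ c : α, K ⊓ c = ⊥ ∧ K ⊔ c = K ⊔ t.sup id := by
  induction t using Finset.induction_on with
  | empty => exact ⟨⊥, inf_bot_eq K, by simp⟩
  | @insert a s ha ih =>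
    obtain ⟨c, hc1, hc2⟩ := ih (fun m hm => ht m (Finset.mem_insert_of_mem hm))
    have hat : IsAtom a := ht a (Finset.mem_insert_self a s)
    rw [Finset.sup_insert]
    by_cases hle : a ≤ K ⊔ c
    · refine ⟨c, hc1, ?_⟩
      simp only [id_eq]
      calc K ⊔ c = a ⊔ (K ⊔ c) := (sup_eq_right.mpr hle).symm
        _ = a ⊔ (K ⊔ s.sup id) := by rw [hc2]
        _ = K ⊔ (a ⊔ s.sup id) := sup_left_comm a K _
    · refine ⟨a ⊔ c, ?_, ?_⟩
      · have h1 : (c ⊔ a) ⊓ (K ⊔ c) = c ⊔ (a ⊓ (K ⊔ c)) := sup_inf_assoc_of_le a le_sup_right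
        have h2 : a ⊓ (K ⊔ c) = ⊥ := by
          rcases hat.le_iff.mp (inf_le_left : a ⊓ (K ⊔ c) ≤ a) with h | h
          · exact h
          · exact absurd (h ▸ inf_le_right) hle
        rw [h2, sup_bot_eq] at h1
        have h3 : K ⊓ (a ⊔ c) = (K ⊓ (K ⊔ c)) ⊓ (a ⊔ c) := by
          rw [inf_eq_left.mpr (le_sup_left : K ≤ K ⊔ c)]
        rw [h3, inf_assoc, inf_comm (K ⊔ c) (a ⊔ c), sup_comm a c, h1, hc1]
      · simp only [id_eq]
        calc K ⊔ (a ⊔ c) = a ⊔ (K ⊔ c) := sup_left_comm K a c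
          _ = a ⊔ (K ⊔ s.sup id) := by rw [hc2]
          _ = K ⊔ (a ⊔ s.sup id) := sup_left_comm a K _
  
lemma exists_compl_of_le_atoms (t : Finset α) (ht : ∀ m ∈ t, IsAtom m) {K N : α}
    (hKN : K ≤ N) (hN : N ≤ t.sup id) : ∃ C, K ⊓ C = ⊥ ∧ K ⊔ C = N := by
  obtain ⟨c, hc1, hc2⟩ := exists_compl_aux t ht K
  refine ⟨c ⊓ N, le_bot_iff.mp (le_trans (inf_le_inf_left K inf_le_left) hc1.le), ?_⟩
  have h1 : (K ⊔ c) ⊓ N = K ⊔ (c ⊓ N) := sup_inf_assoc_of_le c hKN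
  rw [← h1, hc2, inf_eq_right.mpr (hN.trans (le_sup_right.trans le_rfl))]

end ModularUtil



noncomputable def socleR (A : Type*) [Ring A] : Submodule Aᵐᵒᵖ A :=
  sSup {m : Submodule Aᵐᵒᵖ A | IsAtom m}

variable {A : Type*} [Ring A]

/-- Left multiplication as a map of right modules. -/
def mulLeftOp (u : A) : A →ₗ[Aᵐᵒᵖ] A where
  toFun x := u * x
  map_add' := mul_add u
  map_smul' c x := by
    simp only [MulOpposite.smul_eq_mul_unop, RingHom.id_apply, mul_assoc]

@[simp] lemma mulLeftOp_apply (u x : A) : mulLeftOp u x = u * x := rfl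

lemma memL {g x : A} : x ∈ span A {g} ↔ ∃ c : A, c * g = x := by
  rw [mem_span_singleton]
  simp [smul_eq_mul]

lemma memR {g x : A} : x ∈ span Aᵐᵒᵖ {g} ↔ ∃ c : A, g * c = x := by
  rw [mem_span_singleton]
  constructor
  · rintro ⟨a, rfl⟩
    exact ⟨a.unop, by rw [MulOpposite.smul_eq_mul_unop]⟩
  · rintro ⟨c, rfl⟩
    exact ⟨op c, by rw [MulOpposite.smul_eq_mul_unop, unop_op]⟩

lemma smulL {M : Submodule A A} {x : A} (c : A) (h : x ∈ M) : c * x ∈ M := by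
  simpa [smul_eq_mul] using M.smul_mem c h

lemma smulR {X : Submodule Aᵐᵒᵖ A} {x : A} (c : A) (h : x ∈ X) : x * c ∈ X := by
  have := X.smul_mem (op c) h
  rwa [MulOpposite.smul_eq_mul_unop, unop_op] at this

lemma mul_idemL {g x : A} (hg : IsIdempotentElem g) (h : x ∈ span A {g}) : x * g = x := by
  obtain ⟨c, rfl⟩ := memL.mp h
  rw [mul_assoc, hg]

lemma idem_mulR' {g x : A} (hg : IsIdempotentElem g) (h : x ∈ span Aᵐᵒᵖ {g}) : g * x = x := by
  obtain ⟨c, rfl⟩ := memR.mp h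
  rw [← mul_assoc, hg]

lemma atom_genL {S : Submodule A A} (hS : IsAtom S) {x : A} (hx : x ∈ S) (hx0 : x ≠ 0) :
    span A {x} = S := by
  have h1 : span A {x} ≤ S := (span_singleton_le_iff_mem x S).mpr hx
  by_contra hne
  have h2 := hS.2 _ (lt_of_le_of_ne h1 hne)
  have h3 := mem_span_singleton_self (R := A) x
  rw [h2, mem_bot] at h3
  exact hx0 h3

lemma atom_genR {S : Submodule Aᵐᵒᵖ A} (hS : IsAtom S) {x : A} (hx : x ∈ S) (hx0 : x ≠ 0) :
    span Aᵐᵒᵖ {x} = S := by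
  have h1 : span Aᵐᵒᵖ {x} ≤ S := (span_singleton_le_iff_mem x S).mpr hx
  by_contra hne
  have h2 := hS.2 _ (lt_of_le_of_ne h1 hne)
  have h3 := mem_span_singleton_self (R := Aᵐᵒᵖ) x
  rw [h2, mem_bot] at h3
  exact hx0 h3

lemma brauer_left (hA : IsSemiprimeRing A) {S : Submodule A A} (hS : IsAtom S) :
    ∃ g, g ∈ S ∧ IsIdempotentElem g ∧ g ≠ 0 ∧ S = span A {g} := by
  have h0 : ∃ u ∈ S, ∃ s ∈ S, s * u ≠ 0 := by
    by_contra h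
    push_neg at h
    apply hS.1
    rw [eq_bot_iff]
    intro x hx
    have hx0 : x = 0 := hA x (fun a => by
      have := h (a * x) (smulL a hx) x hx
      rwa [← mul_assoc] at this)
    rw [hx0]
    exact zero_mem _
  obtain ⟨u, huS, s0, hs0S, hs0u⟩ := h0
  have hu0 : u ≠ 0 := fun h => hs0u (by rw [h, mul_zero])
  set f := LinearMap.toSpanSingleton A A u with hf
  have hfapp : ∀ x : A, f x = x * u := fun x => by
    simp [hf, LinearMap.toSpanSingleton_apply, smul_eq_mul]
  have hmap_le : S.map f ≤ S := by
    rintro _ ⟨s, _, rfl⟩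
    rw [hfapp]
    exact smulL s huS
  have hmap_ne : S.map f ≠ ⊥ := by
    intro h
    apply hs0u
    have : f s0 ∈ S.map f := ⟨s0, hs0S, rfl⟩
    rw [h, mem_bot] at this
    rwa [hfapp] at this
  have hmap_eq : S.map f = S := by
    rcases lt_or_eq_of_le hmap_le with h | h
    · exact absurd (hS.2 _ h) hmap_ne
    · exact h
  obtain ⟨g, hgS, hgu⟩ : ∃ g ∈ S, g * u = u := by
    have : u ∈ S.map f := hmap_eq.symm ▸ huS
    obtain ⟨g, hg, hgu⟩ := this
    exact ⟨g, hg, by rwa [hfapp] at hgu⟩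
  set T := S ⊓ LinearMap.ker f with hT
  have hgT : g ∉ T := by
    intro h
    have : g * u = 0 := by
      have h2 : f g = 0 := h.2
      rwa [hfapp] at h2
    rw [hgu] at this
    exact hu0 this
  have hTbot : T = ⊥ := hS.2 _ (lt_of_le_of_ne inf_le_left (fun h => hgT (h.symm ▸ hgS)))
  have hgg : g * g - g ∈ T := by
    constructor
    · exact sub_mem (smulL g hgS) hgS
    · show f (g * g - g) = 0
      rw [hfapp, sub_mul, mul_assoc, hgu, hgu, sub_self]
  rw [hTbot, mem_bot, sub_eq_zero] at hgg
  have hg0 : g ≠ 0 := fun h => hu0 (by rw [← hgu, h, zero_mul])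
  exact ⟨g, hgS, hgg, hg0, (atom_genL hS hgS hg0).symm⟩

lemma brauer_right (hA : IsSemiprimeRing A) {S : Submodule Aᵐᵒᵖ A} (hS : IsAtom S) :
    ∃ g, g ∈ S ∧ IsIdempotentElem g ∧ g ≠ 0 ∧ S = span Aᵐᵒᵖ {g} := by
  have h0 : ∃ u ∈ S, ∃ s ∈ S, u * s ≠ 0 := by
    by_contra h
    push_neg at h
    apply hS.1
    rw [eq_bot_iff]
    intro x hx
    have hx0 : x = 0 := hA x (fun a => h (x * a) (smulR a hx) x hx)
    rw [hx0]
    exact zero_mem _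
  obtain ⟨u, huS, s0, hs0S, hs0u⟩ := h0
  have hu0 : u ≠ 0 := fun h => hs0u (by rw [h, zero_mul])
  set f := mulLeftOp (A := A) u with hf
  have hmap_le : S.map f ≤ S := by
    rintro _ ⟨s, _, rfl⟩
    exact smulR s huS
  have hmap_ne : S.map f ≠ ⊥ := by
    intro h
    apply hs0u
    have : f s0 ∈ S.map f := ⟨s0, hs0S, rfl⟩
    rw [h, mem_bot] at this
    exact this
  have hmap_eq : S.map f = S := by
    rcases lt_or_eq_of_le hmap_le with h | h
    · exact absurd (hS.2 _ h) hmap_ne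
    · exact h
  obtain ⟨g, hgS, hgu⟩ : ∃ g ∈ S, u * g = u := by
    have : u ∈ S.map f := hmap_eq.symm ▸ huS
    obtain ⟨g, hg, hgu⟩ := this
    exact ⟨g, hg, hgu⟩
  set T := S ⊓ LinearMap.ker f with hT
  have hgT : g ∉ T := by
    intro h
    have : u * g = 0 := h.2
    rw [hgu] at this
    exact hu0 this
  have hTbot : T = ⊥ := hS.2 _ (lt_of_le_of_ne inf_le_left (fun h => hgT (h.symm ▸ hgS)))
  have hgg : g * g - g ∈ T := by
    constructor
    · exact sub_mem (smulR g hgS) hgS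
    · show u * (g * g - g) = 0
      rw [mul_sub, ← mul_assoc, hgu, hgu, sub_self]
  rw [hTbot, mem_bot, sub_eq_zero] at hgg
  have hg0 : g ≠ 0 := fun h => hu0 (by rw [← hgu, h, mul_zero])
  exact ⟨g, hgS, hgg, hg0, (atom_genR hS hgS hg0).symm⟩

section Corner

lemma corner_left_inv {S : Submodule A A} (hS : IsAtom S) {g : A} (hg : IsIdempotentElem g)
    (hgS : S = span A {g}) {t : A} (ht0 : t ≠ 0) (hgt : g * t = t) (htg : t * g = t) :
    ∃ c, g * c = c ∧ c * g = c ∧ c * t = g := by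
  have htS : t ∈ S := hgS ▸ memL.mpr ⟨t, htg⟩
  have hspan : span A {t} = S := atom_genL hS htS ht0
  have hgmem : g ∈ span A {t} := by
    rw [hspan, hgS]
    exact mem_span_singleton_self g
  obtain ⟨c0, hc0⟩ := memL.mp hgmem
  refine ⟨g * c0 * g, ?_, ?_, ?_⟩
  · rw [← mul_assoc, ← mul_assoc, hg]
  · rw [mul_assoc, hg]
  · rw [mul_assoc, mul_assoc, hgt, ← mul_assoc, mul_assoc, hc0, hg]

lemma corner_two_sided_inv {S : Submodule A A} (hS : IsAtom S) {g : A}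
    (hg : IsIdempotentElem g) (hg0 : g ≠ 0) (hgS : S = span A {g}) {t : A} (ht0 : t ≠ 0)
    (hgt : g * t = t) (htg : t * g = t) : ∃ v, g * v = v ∧ v * g = v ∧ t * v = g := by
  obtain ⟨c, hgc, hcg, hct⟩ := corner_left_inv hS hg hgS ht0 hgt htg
  have hc0 : c ≠ 0 := fun h => hg0 (by rw [← hct, h, zero_mul])
  obtain ⟨d, hgd, hdg, hdc⟩ := corner_left_inv hS hg hgS hc0 hgc hcg
  have htd : d = t := by
    calc d = d * g := hdg.symm
      _ = d * (c * t) := by rw [hct]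
      _ = (d * c) * t := by rw [mul_assoc]
      _ = g * t := by rw [hdc]
      _ = t := hgt
  exact ⟨c, hgc, hcg, by rw [← htd, hdc]⟩


lemma corner_left_inv_op {S : Submodule Aᵐᵒᵖ A} (hS : IsAtom S) {g : A} (hg : IsIdempotentElem g)
    (hgS : S = span Aᵐᵒᵖ {g}) {t : A} (ht0 : t ≠ 0) (hgt : g * t = t) (htg : t * g = t) :
    ∃ c, g * c = c ∧ c * g = c ∧ t * c = g := by
  have htS : t ∈ S := hgS ▸ memR.mpr ⟨t, hgt⟩
  have hspan : span Aᵐᵒᵖ {t} = S := atom_genR hS htS ht0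
  have hgmem : g ∈ span Aᵐᵒᵖ {t} := by
    rw [hspan, hgS]
    exact mem_span_singleton_self g
  obtain ⟨c0, hc0⟩ := memR.mp hgmem
  refine ⟨g * c0 * g, ?_, ?_, ?_⟩
  · rw [← mul_assoc, ← mul_assoc, hg]
  · rw [mul_assoc, hg]
  · rw [show t * (g * c0 * g) = (t * g) * c0 * g by noncomm_ring, htg, hc0, hg]

lemma corner_two_sided_inv_op {S : Submodule Aᵐᵒᵖ A} (hS : IsAtom S) {g : A}
    (hg : IsIdempotentElem g) (hg0 : g ≠ 0) (hgS : S = span Aᵐᵒᵖ {g}) {t : A} (ht0 : t ≠ 0)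
    (hgt : g * t = t) (htg : t * g = t) : ∃ v, g * v = v ∧ v * g = v ∧ v * t = g := by
  obtain ⟨c, hgc, hcg, hct⟩ := corner_left_inv_op hS hg hgS ht0 hgt htg
  have hc0 : c ≠ 0 := fun h => hg0 (by rw [← hct, h, mul_zero])
  obtain ⟨d, hgd, hdg, hdc⟩ := corner_left_inv_op hS hg hgS hc0 hgc hcg
  have htd : d = t := by
    calc d = g * d := hgd.symm
      _ = (t * c) * d := by rw [hct]
      _ = t * (c * d) := by rw [mul_assoc]
      _ = t * g := by rw [hdc]
      _ = t := htg
  exact ⟨c, hgc, hcg, by rw [← htd, hdc]⟩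

lemma atom_right_of_left (hA : IsSemiprimeRing A) {S : Submodule A A} (hS : IsAtom S) {g : A}
    (hg : IsIdempotentElem g) (hg0 : g ≠ 0) (hgS : S = span A {g}) :
    (∀ a : A, g * a ≠ 0 → ∃ r, g * a * r = g) ∧ IsAtom (span Aᵐᵒᵖ {g}) := by
  have key : ∀ a : A, g * a ≠ 0 → ∃ r, g * a * r = g := by
    intro a hga
    have : ∃ u, (g * a) * u * (g * a) ≠ 0 := by
      by_contra h
      push_neg at h
      exact hga (hA _ h)
    obtain ⟨u, hu⟩ := this
    set t := g * a * u * g with htdef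
    have ht0 : t ≠ 0 := by
      intro h
      apply hu
      have : (g * a) * u * (g * a) = t * a := by rw [htdef]; noncomm_ring
      rw [this, h, zero_mul]
    have hgt : g * t = t := by rw [htdef, ← mul_assoc, ← mul_assoc, ← mul_assoc, hg]
    have htg : t * g = t := by rw [htdef, mul_assoc, hg]
    obtain ⟨v, hgv, hvg, htv⟩ := corner_two_sided_inv hS hg hg0 hgS ht0 hgt htg
    refine ⟨u * g * v, ?_⟩
    calc g * a * (u * g * v) = (g * a * u * g) * v := by noncomm_ring
      _ = g := by rw [← htdef, htv]
  refine ⟨key, ?_, ?_⟩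
  · intro h
    have hb : g ∈ (⊥ : Submodule Aᵐᵒᵖ A) := h ▸ mem_span_singleton_self g
    rw [mem_bot] at hb
    exact hg0 hb
  · intro Y hY
    by_contra hYne
    obtain ⟨y, hyY, hy0⟩ := Submodule.ne_bot_iff Y |>.mp hYne
    obtain ⟨a, rfl⟩ := memR.mp (hY.le hyY)
    obtain ⟨r, hr⟩ := key a hy0
    have : g ∈ Y := hr ▸ smulR r hyY
    exact absurd ((span_singleton_le_iff_mem g Y).mpr this) (not_le_of_gt hY)

lemma atom_left_of_right (hA : IsSemiprimeRing A) {S : Submodule Aᵐᵒᵖ A} (hS : IsAtom S) {g : A}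
    (hg : IsIdempotentElem g) (hg0 : g ≠ 0) (hgS : S = span Aᵐᵒᵖ {g}) :
    (∀ a : A, a * g ≠ 0 → ∃ r, r * (a * g) = g) ∧ IsAtom (span A {g}) := by
  have key : ∀ a : A, a * g ≠ 0 → ∃ r, r * (a * g) = g := by
    intro a hga
    have : ∃ u, (a * g) * u * (a * g) ≠ 0 := by
      by_contra h
      push_neg at h
      exact hga (hA _ h)
    obtain ⟨u, hu⟩ := this
    set t := g * u * a * g with htdef
    have ht0 : t ≠ 0 := by
      intro h
      apply hu
      have : (a * g) * u * (a * g) = a * t := by rw [htdef]; noncomm_ring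
      rw [this, h, mul_zero]
    have hgt : g * t = t := by rw [htdef, ← mul_assoc, ← mul_assoc, ← mul_assoc, hg]
    have htg : t * g = t := by rw [htdef, mul_assoc, hg]
    obtain ⟨v, hgv, hvg, hvt⟩ := corner_two_sided_inv_op hS hg hg0 hgS ht0 hgt htg
    refine ⟨v * g * u, ?_⟩
    calc (v * g * u) * (a * g) = v * (g * u * a * g) := by noncomm_ring
      _ = g := by rw [← htdef, hvt]
  refine ⟨key, ?_, ?_⟩
  · intro h
    have hb : g ∈ (⊥ : Submodule A A) := h ▸ mem_span_singleton_self g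
    rw [mem_bot] at hb
    exact hg0 hb
  · intro Y hY
    by_contra hYne
    obtain ⟨y, hyY, hy0⟩ := Submodule.ne_bot_iff Y |>.mp hYne
    obtain ⟨a, rfl⟩ := memL.mp (hY.le hyY)
    obtain ⟨r, hr⟩ := key a hy0
    have : g ∈ Y := hr ▸ smulL r hyY
    exact absurd ((span_singleton_le_iff_mem g Y).mpr this) (not_le_of_gt hY)

end Corner


section Socle

lemma one_le_height_of_ne_bot {γ : Type*} [PartialOrder γ] [OrderBot γ] {x : γ} (h : x ≠ ⊥) :
    1 ≤ height x := by
  have h1 : ((((RelSeries.singleton {(a, b) : γ × γ | a < b} (⊥ : γ))).snoc x (Ne.bot_lt h)).length : ℕ∞) ≤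
      height ((((RelSeries.singleton {(a, b) : γ × γ | a < b} (⊥ : γ))).snoc x (Ne.bot_lt h)).last) :=
    length_le_height_last
  change ((1 : ℕ) : ℕ∞) ≤ height x at h1
  simpa using h1

variable (A) in
lemma socle_eq_span : socle A =
    span A (⋃ (S : {m : Submodule A A // IsAtom m}), (S.1 : Set A)) := by
  rw [socle, sSup_eq_iSup']
  exact iSup_eq_span _

variable (A) in
lemma socleR_eq_span : socleR A =
    span Aᵐᵒᵖ (⋃ (S : {m : Submodule Aᵐᵒᵖ A // IsAtom m}), (S.1 : Set A)) := by
  rw [socleR, sSup_eq_iSup']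
  exact iSup_eq_span _

lemma left_mul_atomR {X : Submodule Aᵐᵒᵖ A} (hX : IsAtom X) {x₀ : A} (hx₀ : x₀ ∈ X)
    (h0 : x₀ ≠ 0) {c : A} (hc : c * x₀ ≠ 0) : IsAtom (span Aᵐᵒᵖ {c * x₀}) := by
  constructor
  · intro h
    have hb := h ▸ mem_span_singleton_self (R := Aᵐᵒᵖ) (c * x₀)
    rw [mem_bot] at hb
    exact hc hb
  · intro Y hY
    by_contra hYne
    obtain ⟨y, hyY, hy0⟩ := Submodule.ne_bot_iff Y |>.mp hYne
    obtain ⟨a, rfl⟩ := memR.mp (hY.le hyY)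
    have hxa0 : x₀ * a ≠ 0 := fun h => hy0 (by rw [mul_assoc, h, mul_zero])
    have hxaX : x₀ * a ∈ X := smulR a hx₀
    have hgen : span Aᵐᵒᵖ {x₀ * a} = X := atom_genR hX hxaX hxa0
    have hx₀mem : x₀ ∈ span Aᵐᵒᵖ {x₀ * a} := hgen.symm ▸ hx₀
    obtain ⟨r, hr⟩ := memR.mp hx₀mem
    have hmem : c * x₀ ∈ Y := by
      have h2 : (c * x₀ * a) * r = c * x₀ := by
        rw [mul_assoc c x₀ a, mul_assoc, hr]
      exact h2 ▸ smulR r hyY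
    exact absurd ((span_singleton_le_iff_mem _ Y).mpr hmem) (not_le_of_gt hY)

lemma right_mul_atomL {S : Submodule A A} (hS : IsAtom S) {x₀ : A} (hx₀ : x₀ ∈ S)
    (h0 : x₀ ≠ 0) {c : A} (hc : x₀ * c ≠ 0) : IsAtom (span A {x₀ * c}) := by
  constructor
  · intro h
    have hb := h ▸ mem_span_singleton_self (R := A) (x₀ * c)
    rw [mem_bot] at hb
    exact hc hb
  · intro Y hY
    by_contra hYne
    obtain ⟨y, hyY, hy0⟩ := Submodule.ne_bot_iff Y |>.mp hYne
    obtain ⟨a, rfl⟩ := memL.mp (hY.le hyY)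
    have hxa0 : a * x₀ ≠ 0 := fun h => hy0 (by rw [← mul_assoc, h, zero_mul])
    have hxaX : a * x₀ ∈ S := smulL a hx₀
    have hgen : span A {a * x₀} = S := atom_genL hS hxaX hxa0
    have hx₀mem : x₀ ∈ span A {a * x₀} := hgen.symm ▸ hx₀
    obtain ⟨r, hr⟩ := memL.mp hx₀mem
    have hmem : x₀ * c ∈ Y := by
      have h2 : r * (a * (x₀ * c)) = x₀ * c := by
        rw [← mul_assoc a x₀ c, ← mul_assoc, hr]
      exact h2 ▸ smulL r hyY
    exact absurd ((span_singleton_le_iff_mem _ Y).mpr hmem) (not_le_of_gt hY)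

lemma socR_mul_left {x : A} (hx : x ∈ socleR A) (c : A) : c * x ∈ socleR A := by
  rw [socleR_eq_span] at hx
  induction hx using span_induction with
  | mem y hy =>
    obtain ⟨S, hyS⟩ := Set.mem_iUnion.mp hy
    by_cases hy0 : y = 0
    · rw [hy0, mul_zero]; exact zero_mem _
    by_cases hcy : c * y = 0
    · rw [hcy]; exact zero_mem _
    have hatom := left_mul_atomR S.2 hyS hy0 hcy
    have hle : span Aᵐᵒᵖ {c * y} ≤ socleR A := le_sSup (α := Submodule Aᵐᵒᵖ A) hatom
    exact hle (mem_span_singleton_self _)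
  | zero => rw [mul_zero]; exact zero_mem _
  | add y z hy hz ihy ihz => rw [mul_add]; exact add_mem ihy ihz
  | smul a y hy ihy =>
    rw [MulOpposite.smul_eq_mul_unop, ← mul_assoc]
    exact smulR _ ihy

lemma socL_mul_right {x : A} (hx : x ∈ socle A) (c : A) : x * c ∈ socle A := by
  rw [socle_eq_span] at hx
  induction hx using span_induction with
  | mem y hy =>
    obtain ⟨S, hyS⟩ := Set.mem_iUnion.mp hy
    by_cases hy0 : y = 0
    · rw [hy0, zero_mul]; exact zero_mem _
    by_cases hcy : y * c = 0
    · rw [hcy]; exact zero_mem _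
    have hatom := right_mul_atomL S.2 hyS hy0 hcy
    have hle : span A {y * c} ≤ socle A := le_sSup (α := Submodule A A) hatom
    exact hle (mem_span_singleton_self _)
  | zero => rw [zero_mul]; exact zero_mem _
  | add y z hy hz ihy ihz => rw [add_mul]; exact add_mem ihy ihz
  | smul a y hy ihy =>
    rw [smul_eq_mul, mul_assoc, ← smul_eq_mul]
    exact Submodule.smul_mem _ _ ihy

lemma socle_le_socR (hA : IsSemiprimeRing A) {x : A} (hx : x ∈ socle A) : x ∈ socleR A := by
  rw [socle_eq_span] at hx
  induction hx using span_induction with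
  | mem y hy =>
    obtain ⟨S, hyS⟩ := Set.mem_iUnion.mp hy
    obtain ⟨g, hgS, hg, hg0, hSg⟩ := brauer_left hA S.2
    have hy' : y ∈ span A {g} := hSg ▸ hyS
    obtain ⟨c, rfl⟩ := memL.mp hy'
    have hatomR : IsAtom (span Aᵐᵒᵖ {g}) := (atom_right_of_left hA S.2 hg hg0 hSg).2
    have hgsoc : g ∈ socleR A := by
      have hle : span Aᵐᵒᵖ {g} ≤ socleR A := le_sSup (α := Submodule Aᵐᵒᵖ A) hatomR
      exact hle (mem_span_singleton_self _)
    exact socR_mul_left hgsoc c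
  | zero => exact zero_mem _
  | add y z hy hz ihy ihz => exact add_mem ihy ihz
  | smul a y hy ihy => rw [smul_eq_mul]; exact socR_mul_left ihy a

lemma socR_le_socle (hA : IsSemiprimeRing A) {x : A} (hx : x ∈ socleR A) : x ∈ socle A := by
  rw [socleR_eq_span] at hx
  induction hx using span_induction with
  | mem y hy =>
    obtain ⟨S, hyS⟩ := Set.mem_iUnion.mp hy
    obtain ⟨g, hgS, hg, hg0, hSg⟩ := brauer_right hA S.2
    have hy' : y ∈ span Aᵐᵒᵖ {g} := hSg ▸ hyS
    obtain ⟨c, rfl⟩ := memR.mp hy'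
    have hatomL : IsAtom (span A {g}) := (atom_left_of_right hA S.2 hg hg0 hSg).2
    have hgsoc : g ∈ socle A := by
      have hle : span A {g} ≤ socle A := le_sSup (α := Submodule A A) hatomL
      exact hle (mem_span_singleton_self _)
    exact socL_mul_right hgsoc c
  | zero => exact zero_mem _
  | add y z hy hz ihy ihz => exact add_mem ihy ihz
  | smul a y hy ihy =>
    rw [MulOpposite.smul_eq_mul_unop]
    exact socL_mul_right ihy a.unop

end Socle

section IdemGen

lemma idem_gen_left (hA : IsSemiprimeRing A) : ∀ (n : ℕ) (N : Submodule A A),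
    height N ≤ (n : ℕ∞) → ∃ g, IsIdempotentElem g ∧ N = span A {g} := by
  intro n
  induction n with
  | zero =>
    intro N hN
    refine ⟨0, IsIdempotentElem.zero, ?_⟩
    have hbot : N = ⊥ := by
      by_contra hne
      have := (one_le_height_of_ne_bot hne).trans hN
      norm_num at this
    rw [hbot, span_zero_singleton]
  | succ n ih =>
    intro N hN
    by_cases hbot : N = ⊥
    · exact ⟨0, IsIdempotentElem.zero, by rw [hbot, span_zero_singleton]⟩
    obtain ⟨S, hS, hSN⟩ := exists_atom_le (n+1) N (by exact_mod_cast hN) hbot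
    obtain ⟨g, hgS, hg, hg0, hSg⟩ := brauer_left hA hS
    set f := LinearMap.toSpanSingleton A A g with hf
    have hfapp : ∀ x : A, f x = x * g := fun x => by
      simp [hf, LinearMap.toSpanSingleton_apply, smul_eq_mul]
    set N' := N ⊓ LinearMap.ker f with hN'
    have hgN : g ∈ N := hSN hgS
    have hsplit : N = span A {g} ⊔ N' := by
      apply le_antisymm
      · intro x hx
        rw [mem_sup]
        refine ⟨x * g, memL.mpr ⟨x, rfl⟩, x - x * g,
          ⟨sub_mem hx (by simpa [smul_eq_mul] using N.smul_mem x hgN), ?_⟩, by abel⟩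
        show f _ = 0
        rw [hfapp, sub_mul, mul_assoc, hg, sub_self]
      · apply sup_le
        · rw [span_singleton_le_iff_mem]; exact hgN
        · exact inf_le_left
    have hne : N' ≠ N := by
      intro h
      have hgN' : g ∈ N' := h.symm ▸ hgN
      have h2 : f g = 0 := hgN'.2
      rw [hfapp] at h2
      exact hg0 (by rw [← hg, h2])
    have hlt : N' < N := lt_of_le_of_ne inf_le_left hne
    have hfin : height N' < ⊤ :=
      lt_of_le_of_lt ((height_mono hlt.le).trans hN) (ENat.coe_lt_top _)
    have hheight : height N' ≤ (n : ℕ∞) := by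
      have h3 := lt_of_lt_of_le (height_strictMono hlt hfin) hN
      rw [Nat.cast_succ] at h3
      exact Order.le_of_lt_add_one h3
    obtain ⟨h, hh, hNh⟩ := ih N' hheight
    have hhN' : h ∈ N' := hNh ▸ mem_span_singleton_self h
    have hhg : h * g = 0 := by
      have h2 : f h = 0 := hhN'.2
      rwa [hfapp] at h2
    set k := h - g * h with hk
    have e2 : h * (g * h) = 0 := by rw [← mul_assoc, hhg, zero_mul]
    have e3 : (g * h) * (g * h) = 0 := by rw [mul_assoc g h (g * h), e2, mul_zero]
    have hkk : IsIdempotentElem k := by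
      show k * k = k
      rw [hk]
      calc (h - g * h) * (h - g * h)
          = h * h - h * (g * h) - ((g * h) * h - (g * h) * (g * h)) := by noncomm_ring
        _ = h - 0 - (g * h - 0) := by rw [hh, e2, e3, mul_assoc g h h, hh]
        _ = h - g * h := by abel
    have hgk : g * k = 0 := by rw [hk, mul_sub, ← mul_assoc, hg, sub_self]
    have hkg : k * g = 0 := by
      rw [hk, sub_mul, hhg, mul_assoc, hhg, mul_zero, sub_self]
    set e := g + k with he'
    have he : IsIdempotentElem e := by
      show (g + k) * (g + k) = g + k
      rw [add_mul, mul_add, mul_add, hg, hkk, hgk, hkg]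
      abel
    have hspan_k : span A {k} = span A {h} := by
      apply le_antisymm
      · rw [span_singleton_le_iff_mem]
        exact memL.mpr ⟨1 - g, by rw [sub_mul, one_mul, ← hk]⟩
      · rw [span_singleton_le_iff_mem]
        exact memL.mpr ⟨h, by rw [hk, mul_sub, hh, e2, sub_zero]⟩
    have hspan_e : span A {g} ⊔ span A {k} = span A {e} := by
      apply le_antisymm
      · apply sup_le <;> rw [span_singleton_le_iff_mem]
        · exact memL.mpr ⟨g, by rw [he', mul_add, hg, hgk, add_zero]⟩
        · exact memL.mpr ⟨k, by rw [he', mul_add, hkg, hkk, zero_add]⟩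
      · rw [span_singleton_le_iff_mem, he']
        exact add_mem (mem_sup_left (mem_span_singleton_self g))
          (mem_sup_right (mem_span_singleton_self k))
    exact ⟨e, he, by rw [hsplit, hNh, ← hspan_k, hspan_e]⟩

lemma idem_gen_right (hA : IsSemiprimeRing A) : ∀ (n : ℕ) (X : Submodule Aᵐᵒᵖ A),
    height X ≤ (n : ℕ∞) →
    (∃ g, IsIdempotentElem g ∧ X = span Aᵐᵒᵖ {g}) ∧ X ≤ socleR A := by
  intro n
  induction n with
  | zero =>
    intro X hX
    have hbot : X = ⊥ := by
      by_contra hne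
      have := (one_le_height_of_ne_bot hne).trans hX
      norm_num at this
    exact ⟨⟨0, IsIdempotentElem.zero, by rw [hbot, span_zero_singleton]⟩, hbot ▸ bot_le⟩
  | succ n ih =>
    intro X hX
    by_cases hbot : X = ⊥
    · exact ⟨⟨0, IsIdempotentElem.zero, by rw [hbot, span_zero_singleton]⟩, hbot ▸ bot_le⟩
    obtain ⟨S, hS, hSX⟩ := exists_atom_le (n+1) X (by exact_mod_cast hX) hbot
    obtain ⟨g, hgS, hg, hg0, hSg⟩ := brauer_right hA hS
    set f := mulLeftOp (A := A) g with hf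
    set X' := X ⊓ LinearMap.ker f with hX'
    have hgX : g ∈ X := hSX hgS
    have hsplit : X = span Aᵐᵒᵖ {g} ⊔ X' := by
      apply le_antisymm
      · intro x hx
        rw [mem_sup]
        refine ⟨g * x, memR.mpr ⟨x, rfl⟩, x - g * x,
          ⟨sub_mem hx (smulR x hgX), ?_⟩, by abel⟩
        show g * (x - g * x) = 0
        rw [mul_sub, ← mul_assoc, hg, sub_self]
      · apply sup_le
        · rw [span_singleton_le_iff_mem]; exact hgX
        · exact inf_le_left
    have hne : X' ≠ X := by
      intro h
      have hgX' : g ∈ X' := h.symm ▸ hgX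
      have h2 : g * g = 0 := hgX'.2
      exact hg0 (by rw [← hg, h2])
    have hlt : X' < X := lt_of_le_of_ne inf_le_left hne
    have hfin : height X' < ⊤ :=
      lt_of_le_of_lt ((height_mono hlt.le).trans hX) (ENat.coe_lt_top _)
    have hheight : height X' ≤ (n : ℕ∞) := by
      have h3 := lt_of_lt_of_le (height_strictMono hlt hfin) hX
      rw [Nat.cast_succ] at h3
      exact Order.le_of_lt_add_one h3
    obtain ⟨⟨h, hh, hXh⟩, hX'soc⟩ := ih X' hheight
    have hhX' : h ∈ X' := hXh ▸ mem_span_singleton_self h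
    have hgh : g * h = 0 := hhX'.2
    set k := h - h * g with hk
    have e2 : (h * g) * h = 0 := by rw [mul_assoc, hgh, mul_zero]
    have e3 : (h * g) * (h * g) = 0 := by rw [← mul_assoc, e2, zero_mul]
    have e4 : h * (h * g) = h * g := by rw [← mul_assoc, hh]
    have hkk : IsIdempotentElem k := by
      show k * k = k
      rw [hk]
      calc (h - h * g) * (h - h * g)
          = h * h - h * (h * g) - ((h * g) * h - (h * g) * (h * g)) := by noncomm_ring
        _ = h - h * g - (0 - 0) := by rw [hh, e4, e2, e3]
        _ = h - h * g := by abel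
    have hgk : g * k = 0 := by
      rw [hk, mul_sub, hgh, ← mul_assoc, hgh, zero_mul, sub_zero]
    have hkg : k * g = 0 := by rw [hk, sub_mul, mul_assoc, hg, sub_self]
    set e := g + k with he'
    have he : IsIdempotentElem e := by
      show (g + k) * (g + k) = g + k
      rw [add_mul, mul_add, mul_add, hg, hkk, hgk, hkg]
      abel
    have hspan_k : span Aᵐᵒᵖ {k} = span Aᵐᵒᵖ {h} := by
      apply le_antisymm
      · rw [span_singleton_le_iff_mem]
        exact memR.mpr ⟨1 - g, by rw [mul_sub, mul_one, ← hk]⟩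
      · rw [span_singleton_le_iff_mem]
        exact memR.mpr ⟨h, by rw [hk, sub_mul, hh, e2, sub_zero]⟩
    have hspan_e : span Aᵐᵒᵖ {g} ⊔ span Aᵐᵒᵖ {k} = span Aᵐᵒᵖ {e} := by
      apply le_antisymm
      · apply sup_le <;> rw [span_singleton_le_iff_mem]
        · exact memR.mpr ⟨g, by rw [he', add_mul, hg, hkg, add_zero]⟩
        · exact memR.mpr ⟨k, by rw [he', add_mul, hgk, hkk, zero_add]⟩
      · rw [span_singleton_le_iff_mem, he']
        exact add_mem (mem_sup_left (mem_span_singleton_self g))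
          (mem_sup_right (mem_span_singleton_self k))
    refine ⟨⟨e, he, by rw [hsplit, hXh, ← hspan_k, hspan_e]⟩, ?_⟩
    rw [hsplit]
    apply sup_le
    · rw [← hSg]
      exact le_sSup (α := Submodule Aᵐᵒᵖ A) hS
    · exact hX'soc

end IdemGen


section Proj

lemma proj_left {e : A} (he : IsIdempotentElem e) (t : Finset (Submodule A A))
    (ht : ∀ m ∈ t, IsAtom m) (hNt : span A {e} ≤ t.sup id)
    {K : Submodule A A} (hK : K ≤ span A {e}) {z : A} (hz : z ∈ span A {e}) (hzK : z ∉ K) :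
    ∃ p : A, e * p = p ∧ p * e = p ∧ (∀ k ∈ K, k * p = 0) ∧ z * p ≠ 0 := by
  set N := span A {e} with hN
  obtain ⟨C, hC1, hC2⟩ := exists_compl_of_le_atoms t ht hK hNt
  have hCN : C ≤ N := le_sup_right.trans hC2.le
  set K' : Submodule A ↥N := K.comap N.subtype with hK'def
  set C' : Submodule A ↥N := C.comap N.subtype with hC'def
  have hmemK' : ∀ x : ↥N, x ∈ K' ↔ (x : A) ∈ K := fun x => Iff.rfl
  have hcompl : IsCompl C' K' := by
    constructor
    · rw [disjoint_iff, eq_bot_iff]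
      intro x hx
      have hx2 : (x : A) ∈ K ⊓ C := ⟨hx.2, hx.1⟩
      rw [hC1, mem_bot] at hx2
      simpa [Submodule.mem_bot] using Subtype.ext hx2
    · rw [codisjoint_iff, eq_top_iff]
      rintro x -
      have hx : (x : A) ∈ K ⊔ C := hC2.symm ▸ x.2
      rw [mem_sup] at hx
      obtain ⟨y, hy, w, hw, hyw⟩ := hx
      rw [mem_sup]
      exact ⟨⟨w, hCN hw⟩, hw, ⟨y, hK hy⟩, hy, Subtype.ext (by simpa [add_comm] using hyw)⟩
  set π := Submodule.linearProjOfIsCompl C' K' hcompl with hπ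
  have heN : e ∈ N := mem_span_singleton_self e
  set p : A := (((π ⟨e, heN⟩ : ↥C') : ↥N) : A) with hp
  have key : ∀ (x : A) (hx : x ∈ N), (((π ⟨x, hx⟩ : ↥C') : ↥N) : A) = x * p := by
    intro x hx
    have hxe : (⟨x, hx⟩ : ↥N) = x • ⟨e, heN⟩ := by
      apply Subtype.ext
      show x = x • e
      rw [smul_eq_mul, mul_idemL he hx]
    rw [hxe, map_smul]
    rw [SetLike.val_smul, SetLike.val_smul, smul_eq_mul]
  have hep : e * p = p := (key e heN).symm
  have hpN : p ∈ N := ((π ⟨e, heN⟩ : ↥C') : ↥N).2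
  have hpe : p * e = p := mul_idemL he hpN
  refine ⟨p, hep, hpe, ?_, ?_⟩
  · intro k hk
    have hkN : k ∈ N := hK hk
    have hk' : (⟨k, hkN⟩ : ↥N) ∈ K' := hk
    have h0 : π ⟨k, hkN⟩ = 0 := (Submodule.linearProjOfIsCompl_apply_eq_zero_iff hcompl).mpr hk'
    have := key k hkN
    rw [h0] at this
    simpa using this.symm
  · intro h0
    have h1 : π ⟨z, hz⟩ = 0 := by
      apply Subtype.ext
      apply Subtype.ext
      show (((π ⟨z, hz⟩ : ↥C') : ↥N) : A) = ((((0 : ↥C') : ↥N)) : A)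
      rw [key z hz, h0]
      simp
    exact hzK ((Submodule.linearProjOfIsCompl_apply_eq_zero_iff hcompl).mp h1)

lemma proj_right {e : A} (he : IsIdempotentElem e) (t : Finset (Submodule Aᵐᵒᵖ A))
    (ht : ∀ m ∈ t, IsAtom m) (hNt : span Aᵐᵒᵖ {e} ≤ t.sup id)
    {K : Submodule Aᵐᵒᵖ A} (hK : K ≤ span Aᵐᵒᵖ {e}) {z : A} (hz : z ∈ span Aᵐᵒᵖ {e})
    (hzK : z ∉ K) :
    ∃ p : A, e * p = p ∧ p * e = p ∧ (∀ k ∈ K, p * k = 0) ∧ p * z ≠ 0 := by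
  set N := span Aᵐᵒᵖ {e} with hN
  obtain ⟨C, hC1, hC2⟩ := exists_compl_of_le_atoms t ht hK hNt
  have hCN : C ≤ N := le_sup_right.trans hC2.le
  set K' : Submodule Aᵐᵒᵖ ↥N := K.comap N.subtype with hK'def
  set C' : Submodule Aᵐᵒᵖ ↥N := C.comap N.subtype with hC'def
  have hcompl : IsCompl C' K' := by
    constructor
    · rw [disjoint_iff, eq_bot_iff]
      intro x hx
      have hx2 : (x : A) ∈ K ⊓ C := ⟨hx.2, hx.1⟩
      rw [hC1, mem_bot] at hx2
      simpa [Submodule.mem_bot] using Subtype.ext hx2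
    · rw [codisjoint_iff, eq_top_iff]
      rintro x -
      have hx : (x : A) ∈ K ⊔ C := hC2.symm ▸ x.2
      rw [mem_sup] at hx
      obtain ⟨y, hy, w, hw, hyw⟩ := hx
      rw [mem_sup]
      exact ⟨⟨w, hCN hw⟩, hw, ⟨y, hK hy⟩, hy, Subtype.ext (by simpa [add_comm] using hyw)⟩
  set π := Submodule.linearProjOfIsCompl C' K' hcompl with hπ
  have heN : e ∈ N := mem_span_singleton_self e
  set p : A := (((π ⟨e, heN⟩ : ↥C') : ↥N) : A) with hp
  have key : ∀ (x : A) (hx : x ∈ N), (((π ⟨x, hx⟩ : ↥C') : ↥N) : A) = p * x := by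
    intro x hx
    have hxe : (⟨x, hx⟩ : ↥N) = (op x) • ⟨e, heN⟩ := by
      apply Subtype.ext
      show x = (op x) • e
      rw [MulOpposite.smul_eq_mul_unop, unop_op, idem_mulR' he hx]
    rw [hxe, map_smul]
    rw [SetLike.val_smul, SetLike.val_smul, MulOpposite.smul_eq_mul_unop, unop_op]
  have hpe : p * e = p := (key e heN).symm
  have hpN : p ∈ N := ((π ⟨e, heN⟩ : ↥C') : ↥N).2
  have hep : e * p = p := idem_mulR' he hpN
  refine ⟨p, hep, hpe, ?_, ?_⟩
  · intro k hk
    have hkN : k ∈ N := hK hk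
    have hk' : (⟨k, hkN⟩ : ↥N) ∈ K' := hk
    have h0 : π ⟨k, hkN⟩ = 0 := (Submodule.linearProjOfIsCompl_apply_eq_zero_iff hcompl).mpr hk'
    have := key k hkN
    rw [h0] at this
    simpa using this.symm
  · intro h0
    have h1 : π ⟨z, hz⟩ = 0 := by
      apply Subtype.ext
      apply Subtype.ext
      show (((π ⟨z, hz⟩ : ↥C') : ↥N) : A) = ((((0 : ↥C') : ↥N)) : A)
      rw [key z hz, h0]
      simp
    exact hzK ((Submodule.linearProjOfIsCompl_apply_eq_zero_iff hcompl).mp h1)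

end Proj


section Duality

lemma mem_rAnn {S : Set A} {x : A} : x ∈ rAnn S ↔ ∀ s ∈ S, s * x = 0 := Iff.rfl

lemma mem_lAnn {S : Set A} {x : A} : x ∈ lAnn S ↔ ∀ s ∈ S, x * s = 0 := Iff.rfl

lemma rAnn_antitone {K₁ K₂ : Submodule A A} (h : K₁ ≤ K₂) :
    rAnn (K₂ : Set A) ≤ rAnn (K₁ : Set A) :=
  fun _ hx s hs => hx s (h hs)

lemma lAnn_antitone {X₁ X₂ : Submodule Aᵐᵒᵖ A} (h : X₁ ≤ X₂) :
    lAnn (X₂ : Set A) ≤ lAnn (X₁ : Set A) :=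
  fun _ hx s hs => hx s (h hs)

lemma rAnn_top : rAnn ((⊤ : Submodule A A) : Set A) = ⊥ := by
  rw [eq_bot_iff]
  intro x hx
  have := hx 1 trivial
  rw [one_mul] at this
  simpa using this

/-- The key duality: `lAnn (rAnn K) = K` for left ideals containing `1 - e`. -/
lemma lAnn_rAnn_eq {e : A} (he : IsIdempotentElem e) (tL : Finset (Submodule A A))
    (htL : ∀ m ∈ tL, IsAtom m) (hNtL : span A {e} ≤ tL.sup id)
    {K : Submodule A A} (h1K : 1 - e ∈ K) :
    lAnn ((rAnn (K : Set A) : Submodule Aᵐᵒᵖ A) : Set A) = K := by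
  apply le_antisymm
  · intro y hy
    have hy1 : y * (1 - e) ∈ K := smulL y h1K
    have hdecomp : y = y * (1 - e) + y * e := by rw [mul_sub, mul_one]; abel
    suffices hz : y * e ∈ K by
      rw [hdecomp]; exact add_mem hy1 hz
    by_contra hzK
    have hzN : y * e ∈ span A {e} := memL.mpr ⟨y, rfl⟩
    have hzK'' : y * e ∉ K ⊓ span A {e} := fun h => hzK h.1
    obtain ⟨p, hep, hpe, hKp, hzp⟩ :=
      proj_left he tL htL hNtL (inf_le_right : K ⊓ span A {e} ≤ span A {e}) hzN hzK''
    have hpAnn : p ∈ rAnn (K : Set A) := by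
      intro s hs
      have hseK : s * e ∈ K := by
        have h2 : s * e = s - s * (1 - e) := by rw [mul_sub, mul_one]; abel
        rw [h2]
        exact sub_mem hs (smulL s h1K)
      have h0 : (s * e) * p = 0 := hKp _ ⟨hseK, memL.mpr ⟨s, rfl⟩⟩
      calc s * p = s * (e * p) := by rw [hep]
        _ = (s * e) * p := by rw [mul_assoc]
        _ = 0 := h0
    have h0 : y * p = 0 := hy p hpAnn
    apply hzp
    calc (y * e) * p = y * (e * p) := by rw [mul_assoc]
      _ = y * p := by rw [hep]
      _ = 0 := h0
  · intro k hk s hs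
    exact hs k hk

/-- The key duality: `rAnn (lAnn X) = X` for right ideals inside `rAnn L`, `1 - e ∈ L`. -/
lemma rAnn_lAnn_eq {e : A} (he : IsIdempotentElem e) (tR : Finset (Submodule Aᵐᵒᵖ A))
    (htR : ∀ m ∈ tR, IsAtom m) (hNtR : span Aᵐᵒᵖ {e} ≤ tR.sup id)
    {L : Submodule A A} (h1e : 1 - e ∈ L)
    {X : Submodule Aᵐᵒᵖ A} (hX : X ≤ rAnn (L : Set A)) :
    rAnn ((lAnn (X : Set A) : Submodule A A) : Set A) = X := by
  have heX : ∀ x ∈ X, x = e * x := by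
    intro x hxX
    have h0 : (1 - e) * x = 0 := (hX hxX) (1 - e) h1e
    have h1 : x - e * x = 0 := by rw [← h0, sub_mul, one_mul]
    rw [sub_eq_zero] at h1
    exact h1
  have hXN : X ≤ span Aᵐᵒᵖ {e} := fun x hxX => memR.mpr ⟨x, (heX x hxX).symm⟩
  apply le_antisymm
  · intro w hw
    have h1eAnn : 1 - e ∈ lAnn (X : Set A) := by
      intro x hxX
      exact (hX hxX) (1 - e) h1e
    have hwE : w = e * w := by
      have h0 : (1 - e) * w = 0 := hw _ h1eAnn
      have h1 : w - e * w = 0 := by rw [← h0, sub_mul, one_mul]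
      rwa [sub_eq_zero] at h1
    have hwN : w ∈ span Aᵐᵒᵖ {e} := memR.mpr ⟨w, hwE.symm⟩
    by_contra hwX
    obtain ⟨p, hep, hpe, hXp, hwp⟩ := proj_right he tR htR hNtR hXN hwN hwX
    have hpL : p ∈ lAnn (X : Set A) := fun x hx => hXp x hx
    exact hwp (hw p hpL)
  · intro x hx s hs
    exact hs x hx

end Duality

section Forward

/-- Get a finite set of atoms above a compact span. -/
lemma exists_atoms_for {x : A} (hx : span A {x} ≤ socle A) :
    ∃ t : Finset (Submodule A A), (∀ m ∈ t, IsAtom m) ∧ span A {x} ≤ t.sup id := by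
  obtain ⟨t, htsub, htle⟩ := (CompleteLattice.isCompactElement_iff_exists_le_sSup_of_le_sSup _ _).mp
    (Submodule.singleton_span_isCompactElement (R := A) x)
    {m : Submodule A A | IsAtom m} (by rw [socle] at hx; exact hx)
  exact ⟨t, fun m hm => htsub hm, htle⟩

lemma exists_atoms_forR {x : A} (hx : span Aᵐᵒᵖ {x} ≤ socleR A) :
    ∃ t : Finset (Submodule Aᵐᵒᵖ A), (∀ m ∈ t, IsAtom m) ∧ span Aᵐᵒᵖ {x} ≤ t.sup id := by
  obtain ⟨t, htsub, htle⟩ := (CompleteLattice.isCompactElement_iff_exists_le_sSup_of_le_sSup _ _).mp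
    (Submodule.singleton_span_isCompactElement (R := Aᵐᵒᵖ) x)
    {m : Submodule Aᵐᵒᵖ A | IsAtom m} (by rw [socleR] at hx; exact hx)
  exact ⟨t, fun m hm => htsub hm, htle⟩

/-- Conclusion of the duality given a suitable idempotent. -/
lemma duality_conclusion (hA : IsSemiprimeRing A) (L : Submodule A A) {e : A}
    (he : IsIdempotentElem e) (heSoc : e ∈ socle A) (h1e : 1 - e ∈ L) :
    coheight L = height (rAnn (L : Set A)) ∧ height (rAnn (L : Set A)) ≠ ⊤ := by
  obtain ⟨tL, htL, htLle⟩ := exists_atoms_for ((span_singleton_le_iff_mem _ _).mpr heSoc)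
  have heSocR : e ∈ socleR A := socle_le_socR hA heSoc
  obtain ⟨tR, htR, htRle⟩ := exists_atoms_forR ((span_singleton_le_iff_mem _ _).mpr heSocR)
  set RL := rAnn (L : Set A) with hRL
  have hK1 : ∀ K : Submodule A A, L ≤ K →
      lAnn ((rAnn (K : Set A) : Submodule Aᵐᵒᵖ A) : Set A) = K :=
    fun K hLK => lAnn_rAnn_eq he tL htL htLle (hLK h1e)
  have hK2 : ∀ X : Submodule Aᵐᵒᵖ A, X ≤ RL →
      rAnn ((lAnn (X : Set A) : Submodule A A) : Set A) = X :=
    fun X hX => rAnn_lAnn_eq he tR htR htRle h1e hX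
  have hLlA : ∀ (X : Submodule Aᵐᵒᵖ A), X ≤ RL → L ≤ lAnn (X : Set A) :=
    fun X hX y hy s hs => (hX hs) y hy
  let Φ : {K : Submodule A A // L ≤ K} ≃o ({X : Submodule Aᵐᵒᵖ A // X ≤ RL})ᵒᵈ :=
  { toFun := fun K => OrderDual.toDual ⟨rAnn (K.1 : Set A), rAnn_antitone K.2⟩
    invFun := fun X => ⟨lAnn (((OrderDual.ofDual X).1 : Submodule Aᵐᵒᵖ A) : Set A),
      hLlA _ (OrderDual.ofDual X).2⟩
    left_inv := fun K => Subtype.ext (hK1 K.1 K.2)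
    right_inv := fun X => OrderDual.toDual.injective (Subtype.ext (hK2 _ (OrderDual.ofDual X).2))
    map_rel_iff' := by
      intro K₁ K₂
      constructor
      · intro h
        have h2 : rAnn ((K₂.1 : Submodule A A) : Set A) ≤ rAnn (K₁.1 : Set A) := h
        have h3 := lAnn_antitone h2
        rw [hK1 K₁.1 K₁.2, hK1 K₂.1 K₂.2] at h3
        exact h3
      · intro h
        exact (rAnn_antitone h : rAnn ((K₂.1 : Submodule A A) : Set A) ≤ _) }
  have hΦtop : Φ ⟨⊤, le_top⟩ = OrderDual.toDual ⟨⊥, bot_le⟩ := Subtype.ext rAnn_top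
  constructor
  · calc coheight L = height (⟨⊤, le_top⟩ : {K : Submodule A A // L ≤ K}) :=
        (coheight_eq_height_subtype L).symm
      _ = height (Φ ⟨⊤, le_top⟩) := (height_orderIso Φ _).symm
      _ = height (OrderDual.toDual (⟨⊥, bot_le⟩ : {X : Submodule Aᵐᵒᵖ A // X ≤ RL})) := by
        rw [hΦtop]
      _ = coheight (⟨⊥, bot_le⟩ : {X : Submodule Aᵐᵒᵖ A // X ≤ RL}) := height_toDual _
      _ = height RL := coheight_bot_subtype RL
  · have hRLN : RL ≤ span Aᵐᵒᵖ {e} := by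
      intro x hx
      have h0 : (1 - e) * x = 0 := hx (1 - e) h1e
      have h1 : x - e * x = 0 := by rw [← h0, sub_mul, one_mul]
      rw [sub_eq_zero] at h1
      exact memR.mpr ⟨x, h1.symm⟩
    have : height RL ≤ (tR.card : ℕ∞) :=
      le_trans (height_mono (hRLN.trans htRle)) (height_finsetSup_atoms_le tR htR)
    exact fun h => by rw [h] at this; exact absurd this (by simp)

/-- Main forward lemma: if `1 ∈ L ⊔ soc(A)` then lengths agree and are finite. -/
lemma forward_main (hA : IsSemiprimeRing A) (L : Submodule A A)
    (h1 : (1 : A) ∈ L ⊔ socle A) :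
    coheight L = height (rAnn (L : Set A)) ∧ height (rAnn (L : Set A)) ≠ ⊤ := by
  obtain ⟨l, hl, s, hs, hls⟩ := mem_sup.mp h1
  -- construct the idempotent e ∈ socle with 1 - e ∈ L
  have hsN : span A {s} ≤ socle A := (span_singleton_le_iff_mem _ _).mpr hs
  obtain ⟨t0, ht0, ht0le⟩ := exists_atoms_for hsN
  have hh0 : height (span A {s}) ≤ (t0.card : ℕ∞) :=
    le_trans (height_mono ht0le) (height_finsetSup_atoms_le t0 ht0)
  obtain ⟨e₀, he₀, hse₀⟩ := idem_gen_left hA t0.card (span A {s}) hh0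
  have hs_mem : s ∈ span A {e₀} := hse₀ ▸ mem_span_singleton_self s
  have hse : s * e₀ = s := mul_idemL he₀ hs_mem
  set e := e₀ + (1 - e₀) * s with he_def
  have hee₀ : e * e₀ = e := by
    rw [he_def]
    calc (e₀ + (1 - e₀) * s) * e₀ = e₀ * e₀ + (1 - e₀) * (s * e₀) := by noncomm_ring
      _ = e₀ + (1 - e₀) * s := by rw [he₀, hse]
  have he1e₀ : e * (1 - e₀) = 0 := by
    rw [he_def]
    calc (e₀ + (1 - e₀) * s) * (1 - e₀)
        = (e₀ - e₀ * e₀) + (1 - e₀) * (s - s * e₀) := by noncomm_ring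
      _ = 0 := by rw [he₀, hse, sub_self, sub_self, mul_zero, add_zero]
  have he : IsIdempotentElem e := by
    show e * e = e
    calc e * e = e * e₀ + (e * (1 - e₀)) * s := by rw [he_def]; noncomm_ring
      _ = e := by rw [hee₀, he1e₀, zero_mul, add_zero]
  have he₀soc : e₀ ∈ socle A := hsN (hse₀ ▸ mem_span_singleton_self e₀)
  have heSoc : e ∈ socle A := by
    rw [he_def]
    exact add_mem he₀soc (smulL _ hs)
  have h1e : 1 - e ∈ L := by
    have heq : 1 - e = (1 - e₀) * (1 - s) := by rw [he_def]; noncomm_ring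
    have hl' : (1 : A) - s ∈ L := by
      have : l = 1 - s := by rw [← hls]; abel
      rwa [← this]
    rw [heq]
    exact smulL _ hl'
  exact duality_conclusion hA L he heSoc h1e

end Forward


section Converse

lemma converse_main (hA : IsSemiprimeRing A) (L : Submodule A A)
    (hle : coheight L ≤ height (rAnn (L : Set A)))
    (hfin : height (rAnn (L : Set A)) ≠ ⊤) :
    (1 : A) ∈ L ⊔ socle A := by
  set RL := rAnn (L : Set A) with hRLdef
  obtain ⟨n, hn⟩ : ∃ n : ℕ, height RL ≤ (n : ℕ∞) := by
    cases h : height RL with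
    | top => exact absurd h hfin
    | coe n => exact ⟨n, h ▸ le_rfl⟩
  obtain ⟨⟨f, hf, hRLf⟩, hRLsoc⟩ := idem_gen_right hA n RL hn
  have hfRL : f ∈ RL := hRLf ▸ mem_span_singleton_self f
  have hfsocR : f ∈ socleR A := hRLsoc hfRL
  have hfsoc : f ∈ socle A := socR_le_socle hA hfsocR
  set Af := span A {f} with hAf
  set T := L ⊔ Af with hT
  by_cases hTtop : T = ⊤
  · have h1T : (1 : A) ∈ T := hTtop ▸ mem_top
    have hle2 : T ≤ L ⊔ socle A := sup_le le_sup_left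
      (le_trans ((span_singleton_le_iff_mem _ _).mpr hfsoc) le_sup_right)
    exact hle2 h1T
  exfalso
  set Λ : Submodule A A := span A {1 - f} ⊔ (L ⊓ Af) with hΛdef
  have h1fΛ : (1 : A) - f ∈ Λ := (le_sup_left : span A {1-f} ≤ Λ) (mem_span_singleton_self _)
  have h1Λ : (1 : A) ∈ Λ ⊔ socle A := by
    rw [mem_sup]
    exact ⟨1 - f, h1fΛ, f, hfsoc, by abel⟩
  obtain ⟨hΛeq, hΛfin⟩ := forward_main hA Λ h1Λ
  have hrAnnΛ : rAnn (Λ : Set A) = RL := by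
    apply le_antisymm
    · intro x hx
      have h0 : (1 - f) * x = 0 := hx _ h1fΛ
      have h1 : x = f * x := by
        have h2 : x - f * x = 0 := by rw [← h0, sub_mul, one_mul]
        rwa [sub_eq_zero] at h2
      rw [hRLf]
      exact memR.mpr ⟨x, h1.symm⟩
    · intro x hxRL s hs
      obtain ⟨y, hy, z, hz, hyz⟩ := mem_sup.mp hs
      have hyx : y * x = 0 := by
        obtain ⟨c, rfl⟩ := memL.mp hy
        have hxf : x ∈ span Aᵐᵒᵖ {f} := hRLf ▸ hxRL
        obtain ⟨a, rfl⟩ := memR.mp hxf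
        calc c * (1 - f) * (f * a) = c * ((f - f * f) * a) := by noncomm_ring
          _ = 0 := by rw [hf, sub_self, zero_mul, mul_zero]
      have hzx : z * x = 0 := hxRL z hz.1
      rw [← hyz, add_mul, hyx, hzx, add_zero]
  rw [hrAnnΛ] at hΛeq
  have hAf_sup : Af ⊔ span A {1 - f} = ⊤ := by
    rw [eq_top_iff]
    intro x _
    rw [mem_sup]
    exact ⟨x * f, memL.mpr ⟨x, rfl⟩, x * (1 - f), memL.mpr ⟨x, rfl⟩,
      by rw [mul_sub, mul_one]; abel⟩
  have hdisj : span A {1 - f} ⊓ Af = ⊥ := by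
    rw [eq_bot_iff]
    rintro x ⟨hx1, hx2⟩
    obtain ⟨c, hc⟩ := memL.mp hx1
    obtain ⟨d, hd⟩ := memL.mp hx2
    have hxf0 : x * f = 0 := by
      rw [← hc]
      calc c * (1 - f) * f = c * (f - f * f) := by noncomm_ring
        _ = 0 := by rw [hf, sub_self, mul_zero]
    have hxf : x * f = x := by rw [← hd, mul_assoc, hf]
    rw [mem_bot, ← hxf, hxf0]
  set ψ : Submodule A A → Submodule A A := fun M => (M ⊓ Af) ⊔ L with hψdef
  have hψle : ∀ M, ψ M ≤ T := fun M => sup_le (le_trans inf_le_right le_sup_right) le_sup_left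
  have hψinj : ∀ M, Λ ≤ M → (ψ M ⊓ Af) ⊔ span A {1 - f} = M := by
    intro M hM
    have hLAfM : L ⊓ Af ≤ M ⊓ Af :=
      le_inf (le_trans (le_sup_right.trans hΛdef.symm.le) hM) inf_le_right
    have step1 : ψ M ⊓ Af = M ⊓ Af := by
      have h1 : ((M ⊓ Af) ⊔ L) ⊓ Af = (M ⊓ Af) ⊔ (L ⊓ Af) :=
        sup_inf_assoc_of_le L inf_le_right
      rw [hψdef]
      simp only []
      rw [h1, sup_eq_left.mpr hLAfM]
    have h1fM : span A {1 - f} ≤ M := le_trans le_sup_left (hΛdef.symm.le.trans hM)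
    rw [step1, inf_sup_assoc_of_le _ h1fM, hAf_sup, inf_top_eq]
  have hψΛ : ψ Λ = L := by
    have h1 : Λ ⊓ Af = L ⊓ Af := by
      rw [hΛdef, sup_comm, sup_inf_assoc_of_le _ (inf_le_right : L ⊓ Af ≤ Af), hdisj, sup_bot_eq]
    rw [hψdef]
    simp only []
    rw [h1, sup_eq_right.mpr (inf_le_left : L ⊓ Af ≤ L)]
  have hstep : coheight Λ + 1 ≤ coheight L := by
    rw [coheight_eq_iSup_head_eq]
    have hne : Nonempty {p : LTSeries (Submodule A A) // p.head = Λ} :=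
      ⟨⟨RelSeries.singleton _ Λ, rfl⟩⟩
    rw [iSup_subtype', ENat.iSup_add]
    apply iSup_le
    rintro ⟨p, hphead⟩
    have hmono : ∀ i, Λ ≤ p.toFun i := fun i => by
      rw [← hphead]; exact p.monotone (Fin.zero_le i)
    have hstrict : StrictMono (fun i => ψ (p.toFun i)) := by
      intro i j hij
      have h1 : p.toFun i < p.toFun j := p.strictMono hij
      have hle2 : ψ (p.toFun i) ≤ ψ (p.toFun j) := sup_le_sup_right (inf_le_inf_right _ h1.le) L
      rcases lt_or_eq_of_le hle2 with h | h
      · exact h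
      · exfalso
        apply h1.ne
        have h2 := congrArg (fun W => (W ⊓ Af) ⊔ span A {1 - f}) h
        simp only [] at h2
        rw [hψinj _ (hmono i), hψinj _ (hmono j)] at h2
        exact h2
    set q := LTSeries.mk p.length (fun i => ψ (p.toFun i)) hstrict with hq
    have hqlast : q.last < ⊤ :=
      lt_top_iff_ne_top.mpr (fun h => hTtop (top_le_iff.mp (h ▸ hψle _)))
    set r := q.snoc ⊤ hqlast with hr
    have hrhead : r.head = L := by
      rw [hr, RelSeries.head_snoc]
      show ψ (p.toFun 0) = L
      rw [show p.toFun 0 = Λ from hphead, hψΛ]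
    have hlen := length_le_coheight (x := L) (p := r) (le_of_eq hrhead.symm)
    have hrlen : r.length = p.length + 1 := by simp [hr, hq, RelSeries.snoc]
    rw [hrlen] at hlen
    exact_mod_cast hlen
  rw [hΛeq] at hstep
  have hcontra := hstep.trans hle
  have : height RL < height RL := (ENat.add_one_le_iff hfin).mp hcontra
  exact lt_irrefl _ this

end Converse


section Final

lemma fred_iff (L : Submodule A A) :
    IsFredholmLeftIdeal L ↔ (1 : A) ∈ L ⊔ socle A := by
  constructor
  · rintro ⟨a, haL, b, hab, hba⟩
    rw [mem_sup]
    exact ⟨b * a, smulL b haL, -(b * a - 1), neg_mem hba, by abel⟩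
  · intro h1
    obtain ⟨y, hy, z, hz, hyz⟩ := mem_sup.mp h1
    refine ⟨y, hy, 1, ?_, ?_⟩
    · have h2 : y * 1 - 1 = -z := by rw [mul_one, ← hyz]; abel
      rw [h2]; exact neg_mem hz
    · have h2 : 1 * y - 1 = -z := by rw [one_mul, ← hyz]; abel
      rw [h2]; exact neg_mem hz

theorem stmt4_aux (hA : IsSemiprimeRing A) (L : Submodule A A) :
    (IsFredholmLeftIdeal L ↔
      mlen A (A ⧸ L) ≤ mlen Aᵐᵒᵖ (rAnn (L : Set A)) ∧ mlen Aᵐᵒᵖ (rAnn (L : Set A)) ≠ ⊤) ∧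
    (IsFredholmLeftIdeal L → mlen A (A ⧸ L) = mlen Aᵐᵒᵖ (rAnn (L : Set A))) := by
  have hQ : mlen A (A ⧸ L) = coheight L := mlen_quot L
  have hR : mlen Aᵐᵒᵖ (rAnn (L : Set A)) = height (rAnn (L : Set A)) :=
    mlen_sub (rAnn (L : Set A))
  constructor
  · constructor
    · intro hF
      obtain ⟨heq, hfin⟩ := forward_main hA L ((fred_iff L).mp hF)
      rw [hQ, hR]
      exact ⟨le_of_eq heq, hfin⟩
    · rintro ⟨hle, hfin⟩
      rw [hQ] at hle
      rw [hR] at hle hfin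
      exact (fred_iff L).mpr (converse_main hA L hle hfin)
  · intro hF
    obtain ⟨heq, _⟩ := forward_main hA L ((fred_iff L).mp hF)
    rw [hQ, hR]
    exact heq

end Final


end FredAux

theorem stmt4 (A : Type*) [Ring A] (hA : IsSemiprimeRing A) (L : Submodule A A) :
    (IsFredholmLeftIdeal L ↔
      mlen A (A ⧸ L) ≤ mlen Aᵐᵒᵖ (rAnn (L : Set A)) ∧ mlen Aᵐᵒᵖ (rAnn (L : Set A)) ≠ ⊤) ∧
    (IsFredholmLeftIdeal L → mlen A (A ⧸ L) = mlen Aᵐᵒᵖ (rAnn (L : Set A))) :=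
  FredAux.stmt4_aux hA L
end

section
/- Let A be a unital ring and L ⊊ A a proper left ideal such that A/L is a semisimple left A-module. Then there exists q ∈ A \ L such that L + A(1-q) is a maximal left ideal and Lq ⊆ L. -/
open MulOpposite Submodule

theorem stmt11 (A : Type*) [Ring A] (L : Submodule A A) (hL : L ≠ ⊤)
    (hss : IsSemisimpleModule A (A ⧸ L)) :
    ∃ q : A, q ∉ L ∧ IsCoatom (L ⊔ Submodule.span A {1 - q}) ∧ ∀ x ∈ L, x * q ∈ L := by
  haveI := hss
  -- the quotient is nontrivial
  haveI : Nontrivial (A ⧸ L) := Submodule.Quotient.nontrivial_iff.mpr hL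
  -- pick an atom S of the submodule lattice of A/L
  obtain ⟨S, hS⟩ := IsAtomic.exists_atom (Submodule A (A ⧸ L))
  -- pick a complement C
  obtain ⟨C, hC⟩ := exists_isCompl S
  set p := S.projectionOnto C hC with hp
  set s : A ⧸ L := (p (Submodule.Quotient.mk 1) : A ⧸ L) with hs
  obtain ⟨q, hq⟩ := Submodule.Quotient.mk_surjective L s
  have key : ∀ x : A, (p (Submodule.Quotient.mk x) : A ⧸ L) = x • s := by
    intro x
    have : (Submodule.Quotient.mk x : A ⧸ L) = x • Submodule.Quotient.mk 1 := by
      rw [← Submodule.Quotient.mk_smul, smul_eq_mul, mul_one]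
    rw [this, map_smul]
    rfl
  have hs0 : s ≠ 0 := by
    intro h0
    apply hS.1
    rw [eq_bot_iff]
    intro v hv
    obtain ⟨x, hx⟩ := Submodule.Quotient.mk_surjective L v
    have h1 : (p v : A ⧸ L) = v := by
      have := Submodule.projectionOnto_apply_left hC ⟨v, hv⟩
      exact congrArg Subtype.val this
    have h2 : (p v : A ⧸ L) = 0 := by
      rw [← hx, key x, h0, smul_zero]
    exact (Submodule.mem_bot A).mpr (h1.symm.trans h2)
  have hqL : q ∉ L := by
    intro h
    apply hs0
    rw [← hq]
    exact (Submodule.Quotient.mk_eq_zero L).2 h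
  have hLq : ∀ x ∈ L, x * q ∈ L := by
    intro x hx
    rw [← Submodule.Quotient.mk_eq_zero L]
    have : (Submodule.Quotient.mk (x * q) : A ⧸ L) = x • s := by
      rw [← hq]; rfl
    rw [this, ← key x, (Submodule.Quotient.mk_eq_zero L).2 hx, map_zero]
    rfl
  refine ⟨q, hqL, ?_, hLq⟩
  -- identify L ⊔ span {1 - q} with the preimage of C
  have hK : L ⊔ Submodule.span A {1 - q} = Submodule.comap L.mkQ C := by
    apply le_antisymm
    · refine sup_le ?_ ?_
      · intro x hx
        simp only [Submodule.mem_comap, Submodule.mkQ_apply]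
        rw [(Submodule.Quotient.mk_eq_zero L).2 hx]
        exact C.zero_mem
      · rw [Submodule.span_le, Set.singleton_subset_iff]
        simp only [SetLike.mem_coe, Submodule.mem_comap, Submodule.mkQ_apply]
        have : (Submodule.Quotient.mk (1 - q) : A ⧸ L) = Submodule.Quotient.mk 1 - s := by
          rw [← hq]; exact map_sub L.mkQ 1 q
        rw [← Submodule.ker_projectionOnto hC, LinearMap.mem_ker, this, map_sub]
        have : p s = p (Submodule.Quotient.mk 1) := by
          rw [hs]
          exact Submodule.projectionOnto_apply_left hC _
        rw [this, sub_self]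
    · intro x hx
      simp only [Submodule.mem_comap, Submodule.mkQ_apply] at hx
      have hxs : x • s = 0 := by
        rw [← key x]
        have := Submodule.projectionOnto_apply_of_mem_right hC hx
        rw [this]; rfl
      have hxq : x * q ∈ L := by
        rw [← Submodule.Quotient.mk_eq_zero L]
        have : (Submodule.Quotient.mk (x * q) : A ⧸ L) = x • s := by rw [← hq]; rfl
        rw [this, hxs]
      have : x = x * q + x * (1 - q) := by rw [mul_sub, mul_one]; abel
      rw [this]
      exact Submodule.add_mem_sup hxq
        (Submodule.smul_mem _ x (Submodule.mem_span_singleton_self _))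
  rw [hK]
  -- C is a coatom
  have hCco : IsCoatom C := by
    constructor
    · intro h
      rw [h] at hC
      exact hS.1 (by simpa using hC.inf_eq_bot)
    · intro D hD
      have hmod : D ⊓ S ⊔ C = D := by
        rw [inf_sup_assoc_of_le S hD.le, hC.sup_eq_top, inf_top_eq]
      rcases hS.le_iff.mp inf_le_right with h | h
      · exact absurd (hmod.symm.trans (by rw [h, bot_sup_eq])) hD.ne'
      · rw [← hmod, h, hC.sup_eq_top]
  -- transfer coatom through comap of the surjective mkQ
  constructor
  · intro h
    apply hCco.1
    have := Submodule.map_comap_eq_of_surjective (Submodule.mkQ_surjective L) C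
    rw [← this, h, Submodule.map_top, Submodule.range_mkQ]
  · intro D hD
    have hLD : L ≤ D := le_trans (by
      intro x hx
      simp only [Submodule.mem_comap, Submodule.mkQ_apply]
      rw [(Submodule.Quotient.mk_eq_zero L).2 hx]
      exact C.zero_mem) hD.le
    have hmapD : C ≤ Submodule.map L.mkQ D := by
      rw [← Submodule.map_comap_eq_of_surjective (Submodule.mkQ_surjective L) C]
      exact Submodule.map_mono hD.le
    have hne : Submodule.map L.mkQ D ≠ C := by
      intro h
      apply hD.ne
      apply le_antisymm hD.le
      intro x hx
      have : L.mkQ x ∈ C := h ▸ Submodule.mem_map_of_mem hx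
      exact this
    have : Submodule.map L.mkQ D = ⊤ := hCco.2 _ (lt_of_le_of_ne hmapD (Ne.symm hne))
    have : D ⊔ L = ⊤ := by
      have h2 := Submodule.comap_map_eq L.mkQ D
      rw [this, Submodule.comap_top, Submodule.ker_mkQ] at h2
      exact h2.symm
    rw [sup_eq_left.2 hLD] at this
    exact this
end

section
/- Let A be a semiprime unital ring with essential socle and L ⊆ A a left ideal with len(A/L) < ∞. Then the right annihilator Ran(L) satisfies len(Ran(L)) ≤ len(A/L) < ∞. -/
open MulOpposite Submodule

/-- A semiprime ring has essential socle if every nonzero two-sided ideal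
meets the socle nontrivially. -/
def HasEssentialSocle (A : Type*) [Ring A] : Prop :=
  ∀ I : TwoSidedIdeal A, I ≠ ⊥ → ∃ x, x ∈ I ∧ x ∈ socle A ∧ x ≠ 0


section AuxProofs
open Order

lemma height_prod_le {α β : Type*} [Preorder α] [Preorder β] (x : α × β) :
    height x ≤ height x.1 + height x.2 := by
  refine height_le fun p hlast => ?_
  have key : ∀ i : Fin (p.length + 1), (i.1 : ℕ∞) ≤ height (p i).1 + height (p i).2 := by
    intro i
    induction i using Fin.induction with
    | zero => simp
    | succ i ih =>
      have hstep := p.step i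
      have ih' : (i.1 : ℕ∞) ≤ height (p i.castSucc).1 + height (p i.castSucc).2 := by
        simpa using ih
      have hsuccval : ((i.succ.1 : ℕ) : ℕ∞) = (i.1 : ℕ∞) + 1 := by
        rw [Fin.val_succ]; push_cast; ring
      rcases Prod.lt_iff.mp hstep with ⟨h1, h2⟩ | ⟨h1, h2⟩
      · rcases eq_or_ne (height (p i.succ).1) ⊤ with ht | ht
        · rw [ht, top_add]; exact le_top
        · have hfin : height (p i.castSucc).1 < ⊤ :=
            lt_of_le_of_lt (height_mono h1.le) (lt_top_iff_ne_top.mpr ht)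
          have hlt := height_strictMono h1 hfin
          rw [hsuccval]
          calc (i.1 : ℕ∞) + 1 ≤ (height (p i.castSucc).1 + height (p i.castSucc).2) + 1 :=
                add_le_add_left ih' 1
            _ = (height (p i.castSucc).1 + 1) + height (p i.castSucc).2 := by ring
            _ ≤ height (p i.succ).1 + height (p i.succ).2 :=
                add_le_add (Order.add_one_le_of_lt hlt) (height_mono h2)
      · rcases eq_or_ne (height (p i.succ).2) ⊤ with ht | ht
        · rw [ht, add_top]; exact le_top
        · have hfin : height (p i.castSucc).2 < ⊤ :=
            lt_of_le_of_lt (height_mono h2.le) (lt_top_iff_ne_top.mpr ht)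
          have hlt := height_strictMono h2 hfin
          rw [hsuccval]
          calc (i.1 : ℕ∞) + 1 ≤ (height (p i.castSucc).1 + height (p i.castSucc).2) + 1 :=
                add_le_add_left ih' 1
            _ = height (p i.castSucc).1 + (height (p i.castSucc).2 + 1) := by ring
            _ ≤ height (p i.succ).1 + height (p i.succ).2 :=
                add_le_add (height_mono h1) (Order.add_one_le_of_lt hlt)
  have h := key (Fin.last _)
  rw [← hlast]
  simpa [RelSeries.last] using h

lemma mlen_eq_height (R M : Type*) [Ring R] [AddCommGroup M] [Module R M] :
    mlen R M = height (⊤ : Submodule R M) := by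
  rw [mlen, ← height_top_eq_krullDim, WithBot.unbotD_coe]


section MlenAux
open Order
variable {R M N : Type*} [Ring R] [AddCommGroup M] [Module R M] [AddCommGroup N] [Module R N]

lemma mlen_le_of_injective (f : M →ₗ[R] N) (hf : Function.Injective f) :
    mlen R M ≤ mlen R N := by
  rw [mlen_eq_height, mlen_eq_height]
  have hmono : Monotone (fun P : Submodule R M => P.map f) := fun _ _ h => Submodule.map_mono h
  have hsm : StrictMono (fun P : Submodule R M => P.map f) :=
    hmono.strictMono_of_injective (Submodule.map_injective_of_injective hf)
  exact (height_le_height_apply_of_strictMono _ hsm ⊤).trans (height_mono le_top)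


lemma mlen_le_add (N : Submodule R M) :
    mlen R M ≤ mlen R N + mlen R (M ⧸ N) := by
  rw [mlen_eq_height, mlen_eq_height, mlen_eq_height]
  set f : Submodule R M → Submodule R N × Submodule R (M ⧸ N) :=
    fun P => (P.comap N.subtype, P.map N.mkQ) with hf
  have hsm : StrictMono f := by
    intro P Q hPQ
    refine lt_of_le_of_ne ⟨Submodule.comap_mono hPQ.le, Submodule.map_mono hPQ.le⟩ ?_
    intro heq
    have h1 : P ⊓ N = Q ⊓ N := by
      have := congrArg (fun P : Submodule R N => P.map N.subtype) (congrArg Prod.fst heq)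
      simpa [hf, Submodule.map_comap_subtype, inf_comm] using this
    have h2 : N ⊔ P = N ⊔ Q := by
      have := congrArg (fun P : Submodule R (M ⧸ N) => P.comap N.mkQ) (congrArg Prod.snd heq)
      simpa [hf, Submodule.comap_map_mkQ] using this
    exact hPQ.ne (eq_of_le_of_inf_le_of_sup_le hPQ.le h1.ge
      (by rw [sup_comm, h2.symm, sup_comm] ))
  calc height (⊤ : Submodule R M) ≤ height (f ⊤) :=
        height_le_height_apply_of_strictMono f hsm ⊤
    _ ≤ height (f ⊤).1 + height (f ⊤).2 := height_prod_le _
    _ ≤ height (⊤ : Submodule R N) + height (⊤ : Submodule R (M ⧸ N)) :=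
        add_le_add (height_mono le_top) (height_mono le_top)


lemma isFiniteLength_of_mlen_ne_top (h : mlen R M ≠ ⊤) : IsFiniteLength R M := by
  rw [mlen_eq_height] at h
  obtain ⟨n, hn⟩ : ∃ n : ℕ, height (⊤ : Submodule R M) = n := by
    cases hcase : height (⊤ : Submodule R M) with
    | top => exact absurd hcase h
    | coe n => exact ⟨n, rfl⟩
  have hbound : ∀ p : LTSeries (Submodule R M), p.length ≤ n := by
    intro p
    have := length_le_height (x := (⊤ : Submodule R M)) (p := p) le_top
    rw [hn] at this
    exact_mod_cast this
  rw [isFiniteLength_iff_isNoetherian_isArtinian]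
  constructor
  · rw [isNoetherian_iff]
    rw [RelEmbedding.wellFounded_iff_isEmpty]
    constructor
    intro f
    -- f : ((· > ·) : ℕ → ℕ → Prop) ↪r ((· > ·) : Submodule R M → _)
    have hmono : StrictMono (fun i : Fin (n + 2) => f i.1) := by
      intro i j hij
      exact f.map_rel_iff.mpr (by exact_mod_cast hij)
    have := hbound (LTSeries.mk (n + 1) (fun i => f i.1) hmono)
    simp at this
  · rw [isArtinian_iff]
    rw [RelEmbedding.wellFounded_iff_isEmpty]
    constructor
    intro f
    -- f : ((· > ·) : ℕ → ℕ → Prop) ↪r ((· < ·) : Submodule R M → _)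
    have hmono : StrictMono (fun i : Fin (n + 2) => f (n + 1 - i.1)) := by
      intro i j hij
      refine f.map_rel_iff.mpr ?_
      have hj : j.1 ≤ n + 1 := Nat.lt_succ_iff.mp j.2
      exact Nat.sub_lt_sub_left (lt_of_lt_of_le hij hj) hij
    have := hbound (LTSeries.mk (n + 1) (fun i => f (n + 1 - i.1)) hmono)
    simp at this


end MlenAux

lemma hom_simple_mlen_le_one {A : Type*} [Ring A] (hA : IsSemiprimeRing A)
    (S : Type*) [AddCommGroup S] [Module A S] [IsSimpleModule A S] :
    mlen Aᵐᵒᵖ (S →ₗ[A] A) ≤ 1 := by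
  -- every nonzero submodule of S →ₗ[A] A is ⊤
  have key : ∀ T : Submodule Aᵐᵒᵖ (S →ₗ[A] A), T = ⊥ ∨ T = ⊤ := by
    intro T
    rcases eq_or_ne T ⊥ with h | h
    · exact Or.inl h
    right
    obtain ⟨φ, hφT, hφ0⟩ : ∃ φ ∈ T, φ ≠ (0 : S →ₗ[A] A) := by
      by_contra hc
      push_neg at hc
      exact h (le_bot_iff.mp fun ψ hψ => (Submodule.mem_bot _).mpr (hc ψ hψ))
    have hφinj : Function.Injective φ := by
      rw [← LinearMap.ker_eq_bot]
      rcases eq_bot_or_eq_top (LinearMap.ker φ) with h' | h'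
      · exact h'
      · exact absurd (LinearMap.ker_eq_top.mp h') hφ0
    -- the range of φ is a left ideal on which multiplication is not identically zero
    obtain ⟨a, ⟨sa, hsa⟩, b, ⟨sb, hsb⟩, hab⟩ :
        ∃ a, (∃ sa, φ sa = a) ∧ ∃ b, (∃ sb, φ sb = b) ∧ a * b ≠ 0 := by
      by_contra hc
      push_neg at hc
      have hzero : ∀ s : S, φ s = 0 := by
        intro s
        refine hA (φ s) fun x => ?_
        have hxs : x * φ s = φ (x • s) := (φ.map_smul x s).symm
        rw [mul_assoc, hxs]
        exact hc (φ s) ⟨s, rfl⟩ (φ (x • s)) ⟨x • s, rfl⟩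
      exact hφ0 (LinearMap.ext fun s => hzero s)
    -- ν = op b • φ : s ↦ φ s * b
    set ν : S →ₗ[A] A := op b • φ with hν
    have hνapp : ∀ s, ν s = φ s * b := fun s => rfl
    have hν0 : ν ≠ 0 := by
      intro hc
      apply hab
      rw [← hsa, ← hνapp sa, hc]
      rfl
    have hνinj : Function.Injective ν := by
      rw [← LinearMap.ker_eq_bot]
      rcases eq_bot_or_eq_top (LinearMap.ker ν) with h' | h'
      · exact h'
      · exact absurd (LinearMap.ker_eq_top.mp h') hν0
    -- range ν ≤ range φ
    have hrange : ∀ s : S, ∃ t : S, φ t = ν s := by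
      intro s
      refine ⟨(φ s) • sb, ?_⟩
      rw [φ.map_smul, smul_eq_mul, hsb, hνapp]
    -- b is in the range of ν : by simplicity of S, comap φ (range ν) = ⊤
    have hcomap : Submodule.comap φ (LinearMap.range ν) = ⊤ := by
      rcases eq_bot_or_eq_top (Submodule.comap φ (LinearMap.range ν)) with h' | h'
      · exfalso
        obtain ⟨t, ht⟩ := hrange sa
        have htmem : t ∈ Submodule.comap φ (LinearMap.range ν) := by
          simp only [Submodule.mem_comap, ht]
          exact ⟨sa, rfl⟩
        rw [h', Submodule.mem_bot] at htmem
        apply hab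
        rw [← hsa, ← hνapp sa, ← ht, htmem, map_zero]
      · exact h'
    obtain ⟨s₀, hs₀⟩ : ∃ s₀ : S, ν s₀ = b := by
      have : sb ∈ Submodule.comap φ (LinearMap.range ν) := hcomap ▸ Submodule.mem_top
      obtain ⟨s₀, hs₀⟩ := Submodule.mem_comap.mp this
      exact ⟨s₀, by rw [hs₀, hsb]⟩
    -- e := φ s₀ satisfies e * b = b, and e • s₀ = s₀
    set e : A := φ s₀ with he
    have heb : e * b = b := by rw [he, ← hνapp, hs₀]
    have hb0 : b ≠ 0 := fun hc => hab (by rw [hc, mul_zero])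
    have hes₀ : e • s₀ = s₀ := by
      apply hνinj
      rw [ν.map_smul, hs₀, smul_eq_mul, heb]
    have hs₀0 : s₀ ≠ 0 := by
      intro hc
      apply hb0
      rw [← hs₀, hc, map_zero]
    -- every ψ is (op (ψ s₀)) • φ, hence in T
    refine top_le_iff.mp fun ψ _ => ?_
    have hψ : ψ = op (ψ s₀) • φ := by
      refine LinearMap.ext fun s => ?_
      rw [LinearMap.smul_apply, MulOpposite.smul_eq_mul_unop, unop_op]
      have hspan : Submodule.span A {s₀} = ⊤ := by
        rcases eq_bot_or_eq_top (Submodule.span A {s₀}) with h' | h'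
        · exact absurd ((Submodule.mem_bot A).mp
            (h' ▸ Submodule.mem_span_singleton_self s₀)) hs₀0
        · exact h'
      obtain ⟨c, hc⟩ : ∃ c : A, c • s₀ = s :=
        Submodule.mem_span_singleton.mp (hspan ▸ Submodule.mem_top)
      have heψ : e * ψ s₀ = ψ s₀ := by
        calc e * ψ s₀ = e • ψ s₀ := rfl
          _ = ψ (e • s₀) := (ψ.map_smul e s₀).symm
          _ = ψ s₀ := by rw [hes₀]
      have hφs : φ s = c * e := by rw [← hc, φ.map_smul, smul_eq_mul, he]
      calc ψ s = ψ (c • s₀) := by rw [hc]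
        _ = c * ψ s₀ := by rw [ψ.map_smul, smul_eq_mul]
        _ = c * (e * ψ s₀) := by rw [heψ]
        _ = (c * e) * ψ s₀ := by rw [mul_assoc]
        _ = φ s * ψ s₀ := by rw [hφs]
    rw [hψ]
    exact Submodule.smul_mem T _ hφT
  -- conclude: height ⊤ ≤ 1
  rw [mlen_eq_height, show (1 : ℕ∞) = ((1 : ℕ) : ℕ∞) from (Nat.cast_one).symm,
    height_le_coe_iff]
  intro y hy
  rcases key y with h | h
  · rw [h, height_bot]; exact_mod_cast Nat.zero_lt_one
  · exact absurd h hy.ne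

lemma key_lemma {A : Type*} [Ring A] (hA : IsSemiprimeRing A)
    {M : Type*} [AddCommGroup M] [Module A M] (h : IsFiniteLength A M) :
    mlen Aᵐᵒᵖ (M →ₗ[A] A) ≤ mlen A M := by
  induction h with
  | @of_subsingleton M _ _ _ =>
    have hsub : Subsingleton (M →ₗ[A] A) := by
      constructor
      intro φ ψ
      refine LinearMap.ext fun m => ?_
      rw [Subsingleton.elim m 0, map_zero, map_zero]
    have : Subsingleton (Submodule Aᵐᵒᵖ (M →ₗ[A] A)) := inferInstance
    rw [mlen_eq_height, height_eq_zero.mpr (fun y _ => le_of_eq (Subsingleton.elim _ _))]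
    exact zero_le
  | @of_simple_quotient M _ _ N _ hN ih =>
    -- restriction map
    set r : (M →ₗ[A] A) →ₗ[Aᵐᵒᵖ] (N →ₗ[A] A) :=
      { toFun := fun φ => φ.comp N.subtype
        map_add' := fun φ ψ => LinearMap.add_comp _ _ _
        map_smul' := fun c φ => rfl } with hr
    have hstep1 : mlen Aᵐᵒᵖ (M →ₗ[A] A) ≤
        mlen Aᵐᵒᵖ (LinearMap.ker r) + mlen Aᵐᵒᵖ ((M →ₗ[A] A) ⧸ LinearMap.ker r) :=
      mlen_le_add _
    -- quotient part embeds into N →ₗ[A] A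
    have hquot : mlen Aᵐᵒᵖ ((M →ₗ[A] A) ⧸ LinearMap.ker r) ≤ mlen A N := by
      refine le_trans (mlen_le_of_injective ((LinearMap.ker r).liftQ r le_rfl) ?_) ih
      rw [← LinearMap.ker_eq_bot]
      exact Submodule.ker_liftQ_eq_bot _ _ le_rfl le_rfl
    -- kernel embeds into (M ⧸ N) →ₗ[A] A
    have hker : mlen Aᵐᵒᵖ (LinearMap.ker r) ≤ 1 := by
      have hle : ∀ φ : LinearMap.ker r, N ≤ LinearMap.ker (φ : M →ₗ[A] A) := by
        rintro ⟨φ, hφ⟩ x hx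
        have : φ.comp N.subtype = 0 := hφ
        have := congrFun (congrArg (fun f : N →ₗ[A] A => (f : N → A)) this) ⟨x, hx⟩
        simpa using this
      set g : (LinearMap.ker r) →ₗ[Aᵐᵒᵖ] ((M ⧸ N) →ₗ[A] A) :=
        { toFun := fun φ => N.liftQ (φ : M →ₗ[A] A) (hle φ)
          map_add' := by
            intro φ ψ
            refine LinearMap.ext fun x => ?_
            obtain ⟨m, rfl⟩ := Submodule.Quotient.mk_surjective N x
            simp [Submodule.liftQ_apply]
          map_smul' := by
            intro c φ
            refine LinearMap.ext fun x => ?_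
            obtain ⟨m, rfl⟩ := Submodule.Quotient.mk_surjective N x
            simp [Submodule.liftQ_apply] } with hg
      have hginj : Function.Injective g := by
        intro φ ψ hφψ
        ext m
        have := congrFun (congrArg (fun f : (M ⧸ N) →ₗ[A] A => (f : (M ⧸ N) → A)) hφψ)
          (Submodule.Quotient.mk m)
        simpa [hg, Submodule.liftQ_apply] using this
      exact le_trans (mlen_le_of_injective g hginj) (hom_simple_mlen_le_one hA _)
    -- lower bound : mlen A N + 1 ≤ mlen A M
    have hNlt : (N : Submodule A M) < ⊤ := by
      rcases eq_or_ne N ⊤ with h | h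
      · exfalso
        have : Subsingleton (M ⧸ N) := by
          rw [h]
          exact Submodule.Quotient.subsingleton_iff.mpr rfl
        exact not_subsingleton_iff_nontrivial.mpr (IsSimpleModule.nontrivial A (M ⧸ N)) this
      · exact lt_top_iff_ne_top.mpr h
    have hNheight : mlen A N ≤ height (N : Submodule A M) := by
      rw [mlen_eq_height]
      have hmono : Monotone (fun P : Submodule A N => P.map N.subtype) :=
        fun _ _ h => Submodule.map_mono h
      have hsm : StrictMono (fun P : Submodule A N => P.map N.subtype) :=
        hmono.strictMono_of_injective
          (Submodule.map_injective_of_injective (Submodule.injective_subtype N))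
      have := height_le_height_apply_of_strictMono _ hsm ⊤
      rwa [Submodule.map_subtype_top] at this
    have hlower : mlen A N + 1 ≤ mlen A M := by
      rw [mlen_eq_height A M]
      rcases eq_or_ne (height (N : Submodule A M)) ⊤ with ht | ht
      · have : height (⊤ : Submodule A M) = ⊤ :=
          top_le_iff.mp (ht ▸ height_mono le_top)
        rw [this]
        exact le_top
      · have hlt := height_strictMono hNlt (lt_top_iff_ne_top.mpr ht)
        exact le_trans (add_le_add_left hNheight 1) (Order.add_one_le_of_lt hlt)
    calc mlen Aᵐᵒᵖ (M →ₗ[A] A)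
        ≤ mlen Aᵐᵒᵖ (LinearMap.ker r) + mlen Aᵐᵒᵖ ((M →ₗ[A] A) ⧸ LinearMap.ker r) := hstep1
      _ ≤ 1 + mlen A N := add_le_add hker hquot
      _ = mlen A N + 1 := add_comm _ _
      _ ≤ mlen A M := hlower


end AuxProofs

theorem stmt15 (A : Type*) [Ring A] (hA : IsSemiprimeRing A) (hE : HasEssentialSocle A)
    (L : Submodule A A) (hL : mlen A (A ⧸ L) ≠ ⊤) :
    mlen Aᵐᵒᵖ (rAnn (L : Set A)) ≤ mlen A (A ⧸ L) := by
  have hfl : IsFiniteLength A (A ⧸ L) := isFiniteLength_of_mlen_ne_top hL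
  have hmem : ∀ x : rAnn (L : Set A), L ≤ LinearMap.ker (LinearMap.toSpanSingleton A A (x : A)) := by
    rintro ⟨x, hx⟩ a ha
    simp only [LinearMap.mem_ker, LinearMap.toSpanSingleton_apply, smul_eq_mul]
    exact hx a ha
  set F : (rAnn (L : Set A)) →ₗ[Aᵐᵒᵖ] ((A ⧸ L) →ₗ[A] A) :=
    { toFun := fun x => L.liftQ (LinearMap.toSpanSingleton A A (x : A)) (hmem x)
      map_add' := by
        intro x y
        refine LinearMap.ext fun z => ?_
        obtain ⟨a, rfl⟩ := Submodule.Quotient.mk_surjective L z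
        simp [Submodule.liftQ_apply, mul_add]
      map_smul' := by
        intro c x
        refine LinearMap.ext fun z => ?_
        obtain ⟨a, rfl⟩ := Submodule.Quotient.mk_surjective L z
        simp only [Submodule.liftQ_apply, LinearMap.toSpanSingleton_apply, RingHom.id_apply,
          LinearMap.smul_apply, MulOpposite.smul_eq_mul_unop, Submodule.coe_smul, smul_eq_mul]
        rw [mul_assoc] } with hF
  have hFapp : ∀ (x : rAnn (L : Set A)) (a : A),
      F x (Submodule.Quotient.mk a) = a * (x : A) := by
    intro x a
    show L.liftQ (LinearMap.toSpanSingleton A A (x : A)) (hmem x) (Submodule.Quotient.mk a) = _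
    rw [Submodule.liftQ_apply, LinearMap.toSpanSingleton_apply, smul_eq_mul]
  have hFinj : Function.Injective F := by
    intro x y hxy
    have h1 := congrFun (congrArg DFunLike.coe hxy) (Submodule.Quotient.mk (1 : A))
    rw [hFapp x 1, hFapp y 1, one_mul, one_mul] at h1
    exact Subtype.ext h1
  exact le_trans (mlen_le_of_injective F hFinj) (key_lemma hA hfl)
end
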